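/- arXiv:1410.8362 — 2 statements merged into one kernel-verified Lean document; each statement's English description precedes it below -/
import Mathlib

section
/- Let L be a linear order of cardinality less than the continuum, whose partition tree T_L has no uncountable chains and admits a strictly order-preserving map into ℝ. Then L admits a strictly order-preserving map into ([0,1]^{<ω₁}_{↘0}, <_altlex). (In particular, every special Aronszajn line embeds into ([0,1]^{<ω₁}_{↘0}, <_altlex).) -/
open Ordinal Set

noncomputable section

/-- Parity of an ordinal: `a = γ + n` with `γ` limit, `n < ω`; even iff `n` is even. -/
def OrdEven (a : Ordinal) : Prop := a % 2 = 0

/-- Upper semicontinuity. -/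
def USC {X : Type} [TopologicalSpace X] (f : X → ℝ) : Prop :=
  ∀ r : ℝ, IsOpen (f ⁻¹' Set.Iio r)

/-- The least ordinal where two transfinite sequences differ. -/
def dOrd (f g : Ordinal → ℝ) : Ordinal := sInf {a | f a ≠ g a}

/-- The alternating lexicographical order on transfinite sequences of reals. -/
def AltLex (f g : Ordinal → ℝ) : Prop :=
  f ≠ g ∧ ((OrdEven (dOrd f g) ∧ f (dOrd f g) < g (dOrd f g)) ∨
    (¬ OrdEven (dOrd f g) ∧ g (dOrd f g) < f (dOrd f g)))

/-- `f` encodes a strictly decreasing countable transfinite sequence in `[0,1]`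
with last element `0` at index `ξ` (padded with `0` beyond `ξ`). -/
def IsDSeqLen (f : Ordinal → ℝ) (ξ : Ordinal) : Prop :=
  ξ < (Cardinal.aleph 1).ord ∧ (∀ a, f a ∈ Set.Icc (0:ℝ) 1) ∧
  (∀ a b, a < b → b ≤ ξ → f b < f a) ∧ (∀ a, ξ ≤ a → f a = 0)

/-- Membership in `[0,1]^{<ω₁}_{↘0}`. -/
def IsDSeq (f : Ordinal → ℝ) : Prop := ∃ ξ, IsDSeqLen f ξ

/-- `Lev` is (the level structure of) a partition tree of the linear order `L`:
level 0 is `{univ}`; at successor stages each node is split into two disjoint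
nonempty subintervals whenever possible; at limit stages one takes the nonempty
intersections along branches. -/
structure IsPartitionTree (L : Type) [LinearOrder L] (Lev : Ordinal → Set (Set L)) : Prop where
  zero : Lev 0 = {Set.univ}
  interval : ∀ a : Ordinal, ∀ I ∈ Lev a, I.Nonempty ∧ I.OrdConnected
  succ : ∀ a : Ordinal, ∀ J : Set L, J ∈ Lev (a + 1) ↔
    ∃ I ∈ Lev a, ∃ I₀ I₁ : Set L, I₀.Nonempty ∧ I₁.Nonempty ∧ I₀ ∪ I₁ = I ∧
      I₀ ∩ I₁ = ∅ ∧ I₀ ∈ Lev (a + 1) ∧ I₁ ∈ Lev (a + 1) ∧ (J = I₀ ∨ J = I₁)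
  succSplit : ∀ a : Ordinal, ∀ I ∈ Lev a,
    (∃ I₀ I₁ : Set L, I₀.Nonempty ∧ I₁.Nonempty ∧ I₀ ∪ I₁ = I ∧ I₀ ∩ I₁ = ∅ ∧
      I₀.OrdConnected ∧ I₁.OrdConnected) →
    ∃ I₀ I₁ : Set L, I₀ ∈ Lev (a + 1) ∧ I₁ ∈ Lev (a + 1) ∧ I₀ ∪ I₁ = I ∧ I₀ ∩ I₁ = ∅
  limit : ∀ a : Ordinal, Order.IsSuccLimit a → ∀ J : Set L, J ∈ Lev a ↔
    (J.Nonempty ∧ ∃ I : Ordinal → Set L, (∀ b, b < a → I b ∈ Lev b) ∧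
      (∀ b c, b ≤ c → c < a → I c ⊆ I b) ∧ J = ⋂ b ∈ Set.Iio a, I b)

namespace Stmt18

universe u v

lemma lt_add_one' (b : Ordinal) : b < b + 1 := by
  rw [Ordinal.add_one_eq_succ]; exact Order.lt_succ b

lemma lt_add_one_iff' {a b : Ordinal} : a < b + 1 ↔ a ≤ b := by
  rw [Ordinal.add_one_eq_succ]; exact Order.lt_succ_iff

lemma add_one_le_iff' {a b : Ordinal} : a + 1 ≤ b ↔ a < b := by
  rw [Ordinal.add_one_eq_succ]; exact Order.succ_le_iff

lemma add_one_inj' {a b : Ordinal} (h : a + 1 = b + 1) : a = b := by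
  have h1 : a ≤ b := lt_add_one_iff'.mp (h ▸ lt_add_one' a)
  have h2 : b ≤ a := lt_add_one_iff'.mp (h ▸ lt_add_one' b)
  exact le_antisymm h1 h2

lemma not_succ_of_limit {a : Ordinal} (ha : Order.IsSuccLimit a) : ¬ ∃ b : Ordinal, b + 1 = a := by
  rintro ⟨b, rfl⟩
  have hb : b < b + 1 := lt_add_one' b
  have := ha.succ_lt hb
  rw [← Ordinal.add_one_eq_succ] at this
  exact absurd this (lt_irrefl _)

/-! ### Correspondence between ordinals in different universes -/

def corr (b : Ordinal.{u}) (a : Ordinal.{v}) : Prop :=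
  Ordinal.lift.{v} b = Ordinal.lift.{u} a

lemma corr_eq {b b' : Ordinal.{u}} {a : Ordinal.{v}} (h : corr b a) (h' : corr b' a) :
    b = b' := Ordinal.lift_inj.mp (h.trans h'.symm)

lemma corr_lt_iff {b b' : Ordinal.{u}} {a a' : Ordinal.{v}} (h : corr b a) (h' : corr b' a') :
    b < b' ↔ a < a' := by
  rw [corr] at h h'
  constructor
  · intro hb
    have h2 : Ordinal.lift.{v} b < Ordinal.lift.{v} b' := Ordinal.lift_lt.mpr hb
    rw [h, h'] at h2
    exact Ordinal.lift_lt.mp h2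
  · intro hb
    have h2 : Ordinal.lift.{u} a < Ordinal.lift.{u} a' := Ordinal.lift_lt.mpr hb
    rw [← h, ← h'] at h2
    exact Ordinal.lift_lt.mp h2

lemma corr_le_iff {b b' : Ordinal.{u}} {a a' : Ordinal.{v}} (h : corr b a) (h' : corr b' a') :
    b ≤ b' ↔ a ≤ a' := by
  rw [corr] at h h'
  constructor
  · intro hb
    have h2 : Ordinal.lift.{v} b ≤ Ordinal.lift.{v} b' := Ordinal.lift_le.mpr hb
    rw [h, h'] at h2
    exact Ordinal.lift_le.mp h2
  · intro hb
    have h2 : Ordinal.lift.{u} a ≤ Ordinal.lift.{u} a' := Ordinal.lift_le.mpr hb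
    rw [← h, ← h'] at h2
    exact Ordinal.lift_le.mp h2

lemma corr_down_left {b : Ordinal.{u}} {a : Ordinal.{v}} (h : corr b a)
    {b' : Ordinal.{u}} (hb : b' ≤ b) : ∃ a' : Ordinal.{v}, corr b' a' := by
  have h1 : Ordinal.lift.{v} b' ≤ Ordinal.lift.{u} a := by
    rw [← h]
    exact Ordinal.lift_le.mpr hb
  obtain ⟨a', ha'⟩ := Ordinal.mem_range_lift_of_le h1
  exact ⟨a', ha'.symm⟩

lemma corr_down_right {b : Ordinal.{u}} {a : Ordinal.{v}} (h : corr b a)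
    {a' : Ordinal.{v}} (ha : a' ≤ a) : ∃ b' : Ordinal.{u}, corr b' a' := by
  have h1 : Ordinal.lift.{u} a' ≤ Ordinal.lift.{v} b := by
    rw [h]
    exact Ordinal.lift_le.mpr ha
  obtain ⟨b', hb'⟩ := Ordinal.mem_range_lift_of_le h1
  exact ⟨b', hb'⟩

lemma corr_omega1 :
    corr ((Cardinal.aleph 1).ord : Ordinal.{u}) ((Cardinal.aleph 1).ord : Ordinal.{v}) := by
  rw [corr, Cardinal.lift_ord, Cardinal.lift_ord, Cardinal.lift_aleph, Cardinal.lift_aleph,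
    Ordinal.lift_one, Ordinal.lift_one]

section Main

variable {L : Type} [LinearOrder L]

/-- Two disjoint order-connected sets are pointwise comparable. -/
lemma ordSep {A B : Set L} (hA : A.OrdConnected) (hB : B.OrdConnected)
    (hAB : A ∩ B = ∅) :
    (∀ p ∈ A, ∀ q ∈ B, p < q) ∨ (∀ p ∈ B, ∀ q ∈ A, p < q) := by
  by_contra h
  push_neg at h
  obtain ⟨⟨p, hp, q, hq, hqp⟩, ⟨p', hp', q', hq', hq'p'⟩⟩ := h
  have hdis : ∀ z : L, z ∈ A → z ∈ B → False := by
    intro z h1 h2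
    have : z ∈ A ∩ B := ⟨h1, h2⟩
    rw [hAB] at this
    exact this
  have hqp' : q < p := lt_of_le_of_ne hqp (fun e => hdis q (e ▸ hp) hq)
  have hq'p'' : q' < p' := lt_of_le_of_ne hq'p' (fun e => hdis q' hq' (e ▸ hp'))
  rcases le_total p p' with h1 | h1
  · exact hdis p hp (hB.out hq hp' ⟨hqp, h1⟩)
  · exact hdis p' (hA.out hq' hp ⟨hq'p', h1⟩) hp'

/-- A "recorded" split of a node `I` at level `a` into a lower and an upper half. -/
def SplitAt (Lev : Ordinal → Set (Set L)) (a : Ordinal) (I H₀ H₁ : Set L) : Prop :=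
  H₀ ∈ Lev (a+1) ∧ H₁ ∈ Lev (a+1) ∧ H₀ ∪ H₁ = I ∧ H₀ ∩ H₁ = ∅ ∧
    H₀.Nonempty ∧ H₁.Nonempty ∧ ∀ p ∈ H₀, ∀ q ∈ H₁, p < q

variable (Lev : Ordinal.{u} → Set (Set L))

def HasSplit (a : Ordinal) (I : Set L) : Prop :=
  ∃ pr : Set L × Set L, SplitAt Lev a I pr.1 pr.2

open Classical in
noncomputable def low (a : Ordinal) (I : Set L) : Set L :=
  if h : HasSplit Lev a I then (Classical.choose h).1 else ∅

open Classical in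
noncomputable def high (a : Ordinal) (I : Set L) : Set L :=
  if h : HasSplit Lev a I then (Classical.choose h).2 else ∅

lemma splitAt_low_high {a : Ordinal} {I : Set L} (h : HasSplit Lev a I) :
    SplitAt Lev a I (low Lev a I) (high Lev a I) := by
  rw [low, high, dif_pos h, dif_pos h]
  exact Classical.choose_spec h

open Classical in
noncomputable def step (a : Ordinal) (I : Set L) (x : L) : Set L :=
  if x ∈ low Lev a I then low Lev a I else high Lev a I

open Classical in
noncomputable def branch (x : L) (a : Ordinal) : Set L :=
  Ordinal.limitRecOn a Set.univ (fun b Ib => if Ib = {x} then Ib else step Lev b Ib x)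
    (fun a _ ih => ⋂ b : Set.Iio a, ih b.1 b.2)

lemma branch_zero (x : L) : branch Lev x 0 = Set.univ := by
  rw [branch, Ordinal.limitRecOn_zero]

open Classical in
lemma branch_succ (x : L) (b : Ordinal) :
    branch Lev x (b+1) =
      if branch Lev x b = {x} then branch Lev x b else step Lev b (branch Lev x b) x := by
  rw [branch, Ordinal.add_one_eq_succ, Ordinal.limitRecOn_succ]
  rfl

lemma branch_limit (x : L) {a : Ordinal} (ha : Order.IsSuccLimit a) :
    branch Lev x a = ⋂ b ∈ Set.Iio a, branch Lev x b := by
  rw [Set.biInter_eq_iInter]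
  rw [branch, Ordinal.limitRecOn_limit _ _ _ _ ha]
  rfl

variable {Lev}

lemma hasSplit (hpt : IsPartitionTree L Lev) {a : Ordinal} {I : Set L} (hI : I ∈ Lev a)
    {p q : L} (hp : p ∈ I) (hq : q ∈ I) (hpq : p < q) : HasSplit Lev a I := by
  obtain ⟨-, hconn⟩ := hpt.interval a I hI
  have hdata : ∃ I₀ I₁ : Set L, I₀.Nonempty ∧ I₁.Nonempty ∧ I₀ ∪ I₁ = I ∧ I₀ ∩ I₁ = ∅ ∧
      I₀.OrdConnected ∧ I₁.OrdConnected := by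
    refine ⟨I ∩ Set.Iic p, I ∩ Set.Ioi p, ⟨p, hp, le_refl p⟩, ⟨q, hq, hpq⟩, ?_, ?_, ?_, ?_⟩
    · rw [← Set.inter_union_distrib_left, Set.Iic_union_Ioi, Set.inter_univ]
    · rw [Set.eq_empty_iff_forall_notMem]
      rintro z ⟨⟨-, hz1⟩, -, hz2⟩
      exact absurd hz1 (not_le.mpr hz2)
    · exact hconn.inter Set.ordConnected_Iic
    · exact hconn.inter Set.ordConnected_Ioi
  obtain ⟨I₀, I₁, h₀, h₁, huni, hdis⟩ := hpt.succSplit a I hI hdata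
  obtain ⟨hne₀, hconn₀⟩ := hpt.interval (a+1) I₀ h₀
  obtain ⟨hne₁, hconn₁⟩ := hpt.interval (a+1) I₁ h₁
  rcases ordSep hconn₀ hconn₁ hdis with hor | hor
  · exact ⟨(I₀, I₁), h₀, h₁, huni, hdis, hne₀, hne₁, hor⟩
  · refine ⟨(I₁, I₀), h₁, h₀, ?_, ?_, hne₁, hne₀, hor⟩
    · rw [Set.union_comm]; exact huni
    · rw [Set.inter_comm]; exact hdis

lemma hasSplit_of_ne (hpt : IsPartitionTree L Lev) {a : Ordinal} {I : Set L} (hI : I ∈ Lev a)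
    {x y : L} (hx : x ∈ I) (hy : y ∈ I) (hxy : x ≠ y) : HasSplit Lev a I := by
  rcases hxy.lt_or_gt with h | h
  · exact hasSplit hpt hI hx hy h
  · exact hasSplit hpt hI hy hx h

lemma branch_master (hpt : IsPartitionTree L Lev) (x : L) : ∀ a : Ordinal,
    x ∈ branch Lev x a ∧
    (∀ b, b ≤ a → branch Lev x a ⊆ branch Lev x b) ∧
    ((∀ b, b < a → branch Lev x b ≠ {x}) → branch Lev x a ∈ Lev a) ∧
    (∀ b, b < a → branch Lev x b ≠ {x} → branch Lev x a ≠ branch Lev x b) := by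
  intro a
  induction a using Ordinal.limitRecOn with
  | zero =>
    refine ⟨?_, ?_, ?_, ?_⟩
    · rw [branch_zero]; exact Set.mem_univ x
    · intro b hb
      have : b = 0 := nonpos_iff_eq_zero.mp hb
      subst this
      exact subset_rfl
    · intro _
      rw [branch_zero, hpt.zero]
      exact Set.mem_singleton _
    · intro b hb
      exact absurd hb (not_lt_zero (a := b))
  | add_one c ih =>
    obtain ⟨hx, hmono, hlev, hne⟩ := ih
    by_cases hsing : branch Lev x c = {x}
    · have heq : branch Lev x (c+1) = branch Lev x c := by
        rw [branch_succ, if_pos hsing]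
      refine ⟨heq ▸ hx, ?_, ?_, ?_⟩
      · intro b hb
        rcases eq_or_lt_of_le hb with h | h
        · subst h; exact subset_rfl
        · rw [heq]; exact hmono b (lt_add_one_iff'.mp h)
      · intro h
        exact absurd hsing (h c (lt_add_one' c))
      · intro b hb hbx hcon
        rcases (lt_add_one_iff'.mp hb).lt_or_eq with h | h
        · exact hne b h hbx (heq ▸ hcon)
        · subst h; rw [heq] at hcon; exact hbx (hcon ▸ hsing)
    · -- split case
      have hIlev : branch Lev x c ∈ Lev c := by
        apply hlev
        intro b hb hbx
        have h1 : branch Lev x c ⊆ {x} := hbx ▸ hmono b hb.le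
        exact hsing (Set.Subset.antisymm h1 (Set.singleton_subset_iff.mpr hx))
      obtain ⟨y, hy, hyx⟩ : ∃ y ∈ branch Lev x c, y ≠ x := by
        by_contra hcon
        push_neg at hcon
        exact hsing (Set.eq_singleton_iff_unique_mem.mpr ⟨hx, hcon⟩)
      have hsplit : HasSplit Lev c (branch Lev x c) := hasSplit_of_ne hpt hIlev hy hx hyx
      obtain ⟨hl, hh, huni, hdis, hlne, hhne, hord⟩ := splitAt_low_high Lev hsplit
      have hdis' : ∀ z : L, z ∈ low Lev c (branch Lev x c) →
          z ∈ high Lev c (branch Lev x c) → False := by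
        intro z h1 h2
        have : z ∈ low Lev c (branch Lev x c) ∩ high Lev c (branch Lev x c) := ⟨h1, h2⟩
        rw [hdis] at this
        exact this
      have hlsub : low Lev c (branch Lev x c) ⊆ branch Lev x c := by
        intro z hz
        rw [← huni]
        exact Set.mem_union_left _ hz
      have hhsub : high Lev c (branch Lev x c) ⊆ branch Lev x c := by
        intro z hz
        rw [← huni]
        exact Set.mem_union_right _ hz
      have hxor : x ∈ low Lev c (branch Lev x c) ∨ x ∈ high Lev c (branch Lev x c) := by
        rw [← Set.mem_union, huni]; exact hx
      have heq : branch Lev x (c+1) = step Lev c (branch Lev x c) x := by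
        rw [branch_succ, if_neg hsing]
      have hB : (branch Lev x (c+1) ∈ Lev (c+1)) ∧
          x ∈ branch Lev x (c+1) ∧
          branch Lev x (c+1) ⊆ branch Lev x c ∧
          branch Lev x (c+1) ≠ branch Lev x c := by
        rw [heq]
        by_cases hxl : x ∈ low Lev c (branch Lev x c)
        · rw [step, if_pos hxl]
          refine ⟨hl, hxl, hlsub, ?_⟩
          intro e
          obtain ⟨z, hz⟩ := hhne
          have hz2 : z ∈ branch Lev x c := hhsub hz
          rw [← e] at hz2
          exact hdis' z hz2 hz
        · rw [step, if_neg hxl]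
          have hxh : x ∈ high Lev c (branch Lev x c) := hxor.resolve_left hxl
          refine ⟨hh, hxh, hhsub, ?_⟩
          intro e
          obtain ⟨z, hz⟩ := hlne
          have hz2 : z ∈ branch Lev x c := hlsub hz
          rw [← e] at hz2
          exact hdis' z hz hz2
      obtain ⟨hB1, hB2, hB3, hB4⟩ := hB
      refine ⟨hB2, ?_, fun _ => hB1, ?_⟩
      · intro b hb
        rcases eq_or_lt_of_le hb with h | h
        · subst h; exact subset_rfl
        · exact hB3.trans (hmono b (lt_add_one_iff'.mp h))
      · intro b hb hbx hcon
        rcases (lt_add_one_iff'.mp hb).lt_or_eq with h | h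
        · apply hne b h hbx
          apply Set.Subset.antisymm (hmono b h.le)
          rw [← hcon]
          exact hB3
        · subst h; exact hB4 hcon
  | limit a ha ih =>
    have hlim := branch_limit Lev x ha
    have hxa : x ∈ branch Lev x a := by
      rw [hlim]
      exact Set.mem_biInter (fun b hb => (ih b hb).1)
    have hmono : ∀ b, b ≤ a → branch Lev x a ⊆ branch Lev x b := by
      intro b hb
      rcases hb.lt_or_eq with hb' | hb'
      · rw [hlim]
        exact Set.biInter_subset_of_mem hb'
      · subst hb'
        exact subset_rfl
    refine ⟨hxa, hmono, ?_, ?_⟩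
    · intro h
      rw [hpt.limit a ha]
      exact ⟨⟨x, hxa⟩, branch Lev x,
        fun b hb => (ih b hb).2.2.1 (fun b' hb' => h b' (hb'.trans hb)),
        fun b c hbc hca => (ih c hca).2.1 b hbc, hlim⟩
    · intro b hb hbx heq
      have hb1 : b + 1 < a := by
        rw [Ordinal.add_one_eq_succ]
        exact ha.succ_lt hb
      have h1 : branch Lev x (b+1) ≠ branch Lev x b :=
        (ih (b+1) hb1).2.2.2 b (lt_add_one' b) hbx
      have h2 : branch Lev x a ⊆ branch Lev x (b+1) := hmono _ hb1.le
      have h3 : branch Lev x (b+1) ⊆ branch Lev x b := (ih (b+1) hb1).2.1 b (lt_add_one' b).le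
      apply h1
      apply Set.Subset.antisymm h3
      rw [← heq]
      exact h2

lemma mem_branch (hpt : IsPartitionTree L Lev) (x : L) (a : Ordinal) :
    x ∈ branch Lev x a := (branch_master hpt x a).1

lemma branch_anti (hpt : IsPartitionTree L Lev) (x : L) {b a : Ordinal} (h : b ≤ a) :
    branch Lev x a ⊆ branch Lev x b := (branch_master hpt x a).2.1 b h

lemma branch_stab (hpt : IsPartitionTree L Lev) (x : L) {b a : Ordinal} (h : b ≤ a)
    (hb : branch Lev x b = {x}) : branch Lev x a = {x} := by
  have h1 : branch Lev x a ⊆ {x} := hb ▸ branch_anti hpt x h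
  exact Set.Subset.antisymm h1 (Set.singleton_subset_iff.mpr (mem_branch hpt x a))

lemma branch_lev (hpt : IsPartitionTree L Lev) (x : L) {a : Ordinal}
    (h : ∀ b, b < a → branch Lev x b ≠ {x}) : branch Lev x a ∈ Lev a :=
  (branch_master hpt x a).2.2.1 h

lemma branch_ssubset (hpt : IsPartitionTree L Lev) (x : L) {b a : Ordinal} (h : b < a)
    (hb : branch Lev x b ≠ {x}) : branch Lev x a ⊂ branch Lev x b :=
  Set.ssubset_iff_subset_ne.mpr ⟨branch_anti hpt x h.le, (branch_master hpt x a).2.2.2 b h hb⟩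

variable (Lev) in
noncomputable def rho (x : L) : Ordinal := sInf {a | branch Lev x a = {x}}

lemma exists_sing (hpt : IsPartitionTree L Lev)
    (hchain : ∀ C : Set (Set L), (∀ I ∈ C, ∃ a, I ∈ Lev a) → IsChain (· ⊆ ·) C → C.Countable)
    (x : L) : ∃ a, a < (Cardinal.aleph 1).ord ∧ branch Lev x a = {x} := by
  by_contra hcon
  push_neg at hcon
  set C : Set (Set L) := branch Lev x '' Set.Iio (Cardinal.aleph 1).ord with hCdef
  have hCcount : C.Countable := by
    apply hchain
    · rintro I ⟨b, hb, rfl⟩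
      exact ⟨b, branch_lev hpt x (fun b' hb' => hcon b' (hb'.trans hb))⟩
    · rintro I ⟨b, hb, rfl⟩ J ⟨c, hc, rfl⟩ -
      rcases le_total b c with h | h
      · exact Or.inr (branch_anti hpt x h)
      · exact Or.inl (branch_anti hpt x h)
  have hinj : Set.InjOn (branch Lev x) (Set.Iio (Cardinal.aleph 1).ord) := by
    intro b hb c hc hbc
    by_contra hne
    rcases lt_or_gt_of_ne hne with h | h
    · exact (branch_ssubset hpt x h (hcon b hb)).ne hbc.symm
    · exact (branch_ssubset hpt x h (hcon c hc)).ne hbc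
  haveI : Countable C := hCcount.to_subtype
  have hfinj : Function.Injective
      (fun b : Set.Iio (Cardinal.aleph 1).ord => (⟨branch Lev x b.1, ⟨b.1, b.2, rfl⟩⟩ : C)) := by
    intro b c hbc
    apply Subtype.ext
    exact hinj b.2 c.2 (congrArg Subtype.val hbc)
  haveI : Countable (Set.Iio (Cardinal.aleph 1).ord) := hfinj.countable
  have hle : Cardinal.mk ↥(Set.Iio (Cardinal.aleph 1).ord) ≤ Cardinal.aleph0 :=
    Cardinal.mk_le_aleph0
  rw [Ordinal.mk_Iio_ordinal, Cardinal.card_ord, Cardinal.lift_le_aleph0] at hle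
  exact absurd hle Cardinal.aleph0_lt_aleph_one.not_ge

lemma rho_lt (hpt : IsPartitionTree L Lev)
    (hchain : ∀ C : Set (Set L), (∀ I ∈ C, ∃ a, I ∈ Lev a) → IsChain (· ⊆ ·) C → C.Countable)
    (x : L) : rho Lev x < (Cardinal.aleph 1).ord ∧ branch Lev x (rho Lev x) = {x} := by
  obtain ⟨a, ha, hax⟩ := exists_sing hpt hchain x
  have hane : Set.Nonempty {a : Ordinal | branch Lev x a = {x}} :=
    ⟨a, show a ∈ {a : Ordinal | branch Lev x a = {x}} from hax⟩
  have hmem : sInf {a : Ordinal | branch Lev x a = {x}} ∈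
      {a : Ordinal | branch Lev x a = {x}} := csInf_mem hane
  rw [Set.mem_setOf_eq] at hmem
  have hle : rho Lev x ≤ a :=
    csInf_le' (show a ∈ {a : Ordinal | branch Lev x a = {x}} from hax)
  exact ⟨lt_of_le_of_lt hle ha, hmem⟩

lemma branch_ne_sing {x : L} {b : Ordinal} (h : b < rho Lev x) :
    branch Lev x b ≠ {x} := by
  intro hb
  have : rho Lev x ≤ b :=
    csInf_le' (show b ∈ {a : Ordinal | branch Lev x a = {x}} from hb)
  exact absurd this (not_le.mpr h)

lemma lev_of_le_rho (hpt : IsPartitionTree L Lev) {x : L} {a : Ordinal} (h : a ≤ rho Lev x) :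
    branch Lev x a ∈ Lev a :=
  branch_lev hpt x (fun b hb => branch_ne_sing (lt_of_lt_of_le hb h))

lemma branch_hasSplit (hpt : IsPartitionTree L Lev) {x : L} {c : Ordinal}
    (hc : c < rho Lev x) : HasSplit Lev c (branch Lev x c) := by
  have hne := branch_ne_sing hc
  have hx := mem_branch hpt x c
  obtain ⟨y, hy, hyx⟩ : ∃ y ∈ branch Lev x c, y ≠ x := by
    by_contra hcon
    push_neg at hcon
    exact hne (Set.eq_singleton_iff_unique_mem.mpr ⟨hx, hcon⟩)
  exact hasSplit_of_ne hpt (lev_of_le_rho hpt hc.le) hy hx hyx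

lemma branch_succ_step {x : L} {c : Ordinal} (hc : c < rho Lev x) :
    branch Lev x (c+1) = step Lev c (branch Lev x c) x := by
  rw [branch_succ, if_neg (branch_ne_sing hc)]

/-! ### Real values -/

noncomputable def uval (Φ : Set L → ℝ) (I : Set L) : ℝ := 1 / (1 + Real.exp (Φ I))

lemma uval_pos {Φ : Set L → ℝ} {I : Set L} : 0 < uval Φ I := by
  rw [uval]
  positivity

lemma uval_lt_one {Φ : Set L → ℝ} {I : Set L} : uval Φ I < 1 := by
  rw [uval, div_lt_one (by positivity)]
  linarith [Real.exp_pos (Φ I)]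

lemma uval_lt {Φ : Set L → ℝ} {I J : Set L} (h : Φ I < Φ J) : uval Φ J < uval Φ I := by
  rw [uval, uval]
  exact one_div_lt_one_div_of_lt (by positivity) (by linarith [Real.exp_lt_exp.mpr h])

variable (Lev) in
open Classical in
noncomputable def sval (Φ : Set L → ℝ) (e : Prop) (b : Ordinal) (I : Set L) (x : L) : ℝ :=
  if (x ∈ low Lev b I) ↔ e then
    max (uval Φ (low Lev b I)) (uval Φ (high Lev b I)) +
      (uval Φ I - max (uval Φ (low Lev b I)) (uval Φ (high Lev b I))) / 3
  else
    max (uval Φ (low Lev b I)) (uval Φ (high Lev b I)) +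
      2 * (uval Φ I - max (uval Φ (low Lev b I)) (uval Φ (high Lev b I))) / 3

variable (Lev) in
open Classical in
noncomputable def Psi (Φ : Set L → ℝ) (x : L) (e : Prop) (a : Ordinal) : ℝ :=
  if a ≤ rho Lev x then
    (if h : ∃ b : Ordinal, b + 1 = a then
      sval Lev Φ e (Classical.choose h) (branch Lev x (Classical.choose h)) x
     else uval Φ (branch Lev x a))
  else 0

lemma psi_succ (Φ : Set L → ℝ) (x : L) (e : Prop) {c : Ordinal} (h : c + 1 ≤ rho Lev x) :
    Psi Lev Φ x e (c+1) = sval Lev Φ e c (branch Lev x c) x := by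
  have hex : ∃ b : Ordinal, b + 1 = c + 1 := ⟨c, rfl⟩
  have he : Classical.choose hex = c := add_one_inj' (Classical.choose_spec hex)
  rw [Psi, if_pos h, dif_pos hex, he]

lemma psi_notsucc (Φ : Set L → ℝ) (x : L) (e : Prop) {a : Ordinal} (h1 : a ≤ rho Lev x)
    (h2 : ¬ ∃ b : Ordinal, b + 1 = a) :
    Psi Lev Φ x e a = uval Φ (branch Lev x a) := by
  rw [Psi, if_pos h1, dif_neg h2]

lemma psi_of_gt (Φ : Set L → ℝ) (x : L) (e : Prop) {a : Ordinal} (h : ¬ a ≤ rho Lev x) :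
    Psi Lev Φ x e a = 0 := by
  rw [Psi, if_neg h]

variable (Lev) in
open Classical in
noncomputable def Psi2 (Φ : Set L → ℝ) (x : L) (a : Ordinal.{v}) : ℝ :=
  if h : ∃ b : Ordinal.{u}, corr b a then
    Psi Lev Φ x (OrdEven a) (Classical.choose h) else 0

lemma psi2_corr (Φ : Set L → ℝ) (x : L) {b : Ordinal.{u}} {a : Ordinal.{v}} (hc : corr b a) :
    Psi2 Lev Φ x a = Psi Lev Φ x (OrdEven a) b := by
  have hex : ∃ b' : Ordinal.{u}, corr b' a := ⟨b, hc⟩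
  rw [Psi2, dif_pos hex, corr_eq (Classical.choose_spec hex) hc]

lemma psi2_cases (Φ : Set L → ℝ) (x : L) (a : Ordinal.{v}) :
    Psi2 Lev Φ x a = 0 ∨
      ∃ b : Ordinal.{u}, corr b a ∧ Psi2 Lev Φ x a = Psi Lev Φ x (OrdEven a) b := by
  by_cases h : ∃ b : Ordinal.{u}, corr b a
  · obtain ⟨b, hb⟩ := h
    exact Or.inr ⟨b, hb, psi2_corr Φ x hb⟩
  · left
    rw [Psi2, dif_neg h]

section withPhi

variable (hpt : IsPartitionTree L Lev) {Φ : Set L → ℝ}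
  (hΦ : ∀ I J : Set L, (∃ a, I ∈ Lev a) → (∃ b, J ∈ Lev b) → J ⊂ I → Φ I < Φ J)

include hpt hΦ

lemma split_m_lt {x : L} {c : Ordinal} (hc : c < rho Lev x) :
    max (uval Φ (low Lev c (branch Lev x c))) (uval Φ (high Lev c (branch Lev x c))) <
      uval Φ (branch Lev x c) := by
  obtain ⟨hl, hh, huni, hdis, hlne, hhne, hord⟩ := splitAt_low_high Lev (branch_hasSplit hpt hc)
  have hIlev := lev_of_le_rho hpt hc.le
  have hdis' : ∀ z : L, z ∈ low Lev c (branch Lev x c) →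
      z ∈ high Lev c (branch Lev x c) → False := by
    intro z h1 h2
    have : z ∈ low Lev c (branch Lev x c) ∩ high Lev c (branch Lev x c) := ⟨h1, h2⟩
    rw [hdis] at this
    exact this
  have hlsub0 : low Lev c (branch Lev x c) ⊆ branch Lev x c := by
    intro z hz; rw [← huni]; exact Set.mem_union_left _ hz
  have hhsub0 : high Lev c (branch Lev x c) ⊆ branch Lev x c := by
    intro z hz; rw [← huni]; exact Set.mem_union_right _ hz
  have hlsub : low Lev c (branch Lev x c) ⊂ branch Lev x c := by
    refine Set.ssubset_iff_subset_ne.mpr ⟨hlsub0, ?_⟩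
    intro e
    obtain ⟨z, hz⟩ := hhne
    have hz2 : z ∈ branch Lev x c := hhsub0 hz
    rw [← e] at hz2
    exact hdis' z hz2 hz
  have hhsub : high Lev c (branch Lev x c) ⊂ branch Lev x c := by
    refine Set.ssubset_iff_subset_ne.mpr ⟨hhsub0, ?_⟩
    intro e
    obtain ⟨z, hz⟩ := hlne
    have hz2 : z ∈ branch Lev x c := hlsub0 hz
    rw [← e] at hz2
    exact hdis' z hz hz2
  exact max_lt (uval_lt (hΦ _ _ ⟨c, hIlev⟩ ⟨c+1, hl⟩ hlsub))
    (uval_lt (hΦ _ _ ⟨c, hIlev⟩ ⟨c+1, hh⟩ hhsub))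

lemma sval_bounds {x : L} {c : Ordinal} (hc : c < rho Lev x) (e : Prop) (z : L) :
    max (uval Φ (low Lev c (branch Lev x c))) (uval Φ (high Lev c (branch Lev x c))) <
      sval Lev Φ e c (branch Lev x c) z ∧
    sval Lev Φ e c (branch Lev x c) z < uval Φ (branch Lev x c) := by
  have h := split_m_lt hpt hΦ hc
  rw [sval]
  split_ifs <;> constructor <;> linarith

lemma psi_bounds (x : L) (e : Prop) {a : Ordinal} (ha : a ≤ rho Lev x) :
    uval Φ (branch Lev x a) ≤ Psi Lev Φ x e a ∧ Psi Lev Φ x e a < 1 ∧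
    ∀ b, b < a → Psi Lev Φ x e a < uval Φ (branch Lev x b) := by
  by_cases hs : ∃ c : Ordinal, c + 1 = a
  · obtain ⟨c, rfl⟩ := hs
    rw [psi_succ Φ x e ha]
    have hc : c < rho Lev x := lt_of_lt_of_le (lt_add_one' c) ha
    have hsv := sval_bounds hpt hΦ hc e x
    have hbr : uval Φ (branch Lev x (c+1)) ≤
        max (uval Φ (low Lev c (branch Lev x c))) (uval Φ (high Lev c (branch Lev x c))) := by
      rw [branch_succ_step hc, step]
      split_ifs
      · exact le_max_left _ _
      · exact le_max_right _ _
    refine ⟨le_trans hbr hsv.1.le, lt_trans hsv.2 uval_lt_one, ?_⟩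
    intro b hb
    have hb' : b ≤ c := lt_add_one_iff'.mp hb
    have h2 : uval Φ (branch Lev x c) ≤ uval Φ (branch Lev x b) := by
      rcases hb'.lt_or_eq with h | h
      · exact (uval_lt (hΦ _ _ ⟨b, lev_of_le_rho hpt (h.le.trans hc.le)⟩
          ⟨c, lev_of_le_rho hpt hc.le⟩ (branch_ssubset hpt x h (branch_ne_sing (h.trans hc))))).le
      · rw [h]
    linarith [hsv.2]
  · rw [psi_notsucc Φ x e ha hs]
    refine ⟨le_refl _, uval_lt_one, ?_⟩
    intro b hb
    have hbr : b < rho Lev x := lt_of_lt_of_le hb ha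
    exact uval_lt (hΦ _ _ ⟨b, lev_of_le_rho hpt hbr.le⟩ ⟨a, lev_of_le_rho hpt ha⟩
      (branch_ssubset hpt x hb (branch_ne_sing hbr)))

lemma psi_pos (x : L) (e : Prop) {a : Ordinal} (ha : a ≤ rho Lev x) : 0 < Psi Lev Φ x e a :=
  lt_of_lt_of_le uval_pos (psi_bounds hpt hΦ x e ha).1

end withPhi

end Main

end Stmt18

theorem stmt_18 (L : Type) [LinearOrder L]
    (hcard : Cardinal.mk L < Cardinal.continuum)
    (Lev : Ordinal → Set (Set L)) (hpt : IsPartitionTree L Lev)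
    (hchain : ∀ C : Set (Set L), (∀ I ∈ C, ∃ a, I ∈ Lev a) →
      IsChain (· ⊆ ·) C → C.Countable)
    (hspec : ∃ Φ : Set L → ℝ, ∀ I J : Set L, (∃ a, I ∈ Lev a) → (∃ b, J ∈ Lev b) →
      J ⊂ I → Φ I < Φ J) :
    ∃ Ψ : L → Ordinal → ℝ, (∀ x, IsDSeq (Ψ x)) ∧
      ∀ x y : L, x < y → AltLex (Ψ x) (Ψ y) := by
  classical
  obtain ⟨Φ, hΦ⟩ := hspec
  refine ⟨fun x => Stmt18.Psi2 Lev Φ x, ?_, ?_⟩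
  · -- each sequence is a decreasing sequence in [0,1] ending in 0
    intro x
    show IsDSeq (Stmt18.Psi2 Lev Φ x)
    have hrho := Stmt18.rho_lt hpt hchain x
    have hr1 : Stmt18.rho Lev x + 1 < (Cardinal.aleph 1).ord := by
      have h2 := (Cardinal.isSuccLimit_ord (Cardinal.aleph0_le_aleph 1)).succ_lt hrho.1
      rw [← Ordinal.add_one_eq_succ] at h2
      exact h2
    obtain ⟨ξ, hξ⟩ : ∃ a, Stmt18.corr (Stmt18.rho Lev x + 1) a :=
      Stmt18.corr_down_left Stmt18.corr_omega1 hr1.le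
    refine ⟨ξ, ?_, ?_, ?_, ?_⟩
    · exact (Stmt18.corr_lt_iff hξ Stmt18.corr_omega1).mp hr1
    · -- values in [0,1]
      intro a
      rcases Stmt18.psi2_cases (Lev := Lev) Φ x a with h | ⟨b, hb, h⟩
      · rw [h]
        exact ⟨le_refl _, zero_le_one⟩
      · rw [h]
        by_cases hbρ : b ≤ Stmt18.rho Lev x
        · exact ⟨(Stmt18.psi_pos hpt hΦ x _ hbρ).le,
            (Stmt18.psi_bounds hpt hΦ x _ hbρ).2.1.le⟩
        · rw [Stmt18.psi_of_gt Φ x _ hbρ]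
          exact ⟨le_refl _, zero_le_one⟩
    · -- strictly decreasing up to ξ
      intro a b hab hb
      obtain ⟨b', hb'⟩ : ∃ b', Stmt18.corr b' b := Stmt18.corr_down_right hξ hb
      obtain ⟨a', ha'⟩ : ∃ a', Stmt18.corr a' a := Stmt18.corr_down_right hb' hab.le
      have hab' : a' < b' := (Stmt18.corr_lt_iff ha' hb').mpr hab
      have hbρ1 : b' ≤ Stmt18.rho Lev x + 1 := (Stmt18.corr_le_iff hb' hξ).mpr hb
      have ha'ρ : a' ≤ Stmt18.rho Lev x :=
        Stmt18.lt_add_one_iff'.mp (lt_of_lt_of_le hab' hbρ1)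
      rw [Stmt18.psi2_corr Φ x ha', Stmt18.psi2_corr Φ x hb']
      by_cases hbρ : b' ≤ Stmt18.rho Lev x
      · calc Stmt18.Psi Lev Φ x (OrdEven b) b' < Stmt18.uval Φ (Stmt18.branch Lev x a') :=
              (Stmt18.psi_bounds hpt hΦ x _ hbρ).2.2 a' hab'
          _ ≤ Stmt18.Psi Lev Φ x (OrdEven a) a' := (Stmt18.psi_bounds hpt hΦ x _ ha'ρ).1
      · rw [Stmt18.psi_of_gt Φ x _ hbρ]
        exact Stmt18.psi_pos hpt hΦ x _ ha'ρ
    · -- zero from ξ on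
      intro a ha
      rcases Stmt18.psi2_cases (Lev := Lev) Φ x a with h | ⟨b, hb, h⟩
      · exact h
      · rw [h]
        apply Stmt18.psi_of_gt
        intro hle
        have h1 : Stmt18.rho Lev x + 1 ≤ b := (Stmt18.corr_le_iff hξ hb).mpr ha
        exact absurd (le_trans h1 hle) (not_le.mpr (Stmt18.lt_add_one' _))
  · -- order preservation
    intro x y hxy
    show AltLex (Stmt18.Psi2 Lev Φ x) (Stmt18.Psi2 Lev Φ y)
    have hrhox := Stmt18.rho_lt hpt hchain x
    -- the first level where the branches of x and y differ
    have hSne : Set.Nonempty {a : Ordinal | Stmt18.branch Lev x a ≠ Stmt18.branch Lev y a} := by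
      refine ⟨max (Stmt18.rho Lev x) (Stmt18.rho Lev y), ?_⟩
      have h1 : Stmt18.branch Lev x (max (Stmt18.rho Lev x) (Stmt18.rho Lev y)) = {x} :=
        Stmt18.branch_stab hpt x (le_max_left _ _) (Stmt18.rho_lt hpt hchain x).2
      have h2 : Stmt18.branch Lev y (max (Stmt18.rho Lev x) (Stmt18.rho Lev y)) = {y} :=
        Stmt18.branch_stab hpt y (le_max_right _ _) (Stmt18.rho_lt hpt hchain y).2
      show Stmt18.branch Lev x _ ≠ Stmt18.branch Lev y _
      rw [h1, h2]
      intro e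
      exact hxy.ne (Set.singleton_eq_singleton_iff.mp e)
    have hdS : Stmt18.branch Lev x
          (sInf {a : Ordinal | Stmt18.branch Lev x a ≠ Stmt18.branch Lev y a}) ≠
        Stmt18.branch Lev y
          (sInf {a : Ordinal | Stmt18.branch Lev x a ≠ Stmt18.branch Lev y a}) := by
      have := csInf_mem hSne
      rw [Set.mem_setOf_eq] at this
      exact this
    have hdmin : ∀ b, b < sInf {a : Ordinal | Stmt18.branch Lev x a ≠ Stmt18.branch Lev y a} →
        Stmt18.branch Lev x b = Stmt18.branch Lev y b := by
      intro b hb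
      by_contra h
      have : sInf {a : Ordinal | Stmt18.branch Lev x a ≠ Stmt18.branch Lev y a} ≤ b :=
        csInf_le' (show b ∈ {a : Ordinal | Stmt18.branch Lev x a ≠ Stmt18.branch Lev y a} from h)
      exact absurd this (not_le.mpr hb)
    obtain ⟨c, hdc⟩ : ∃ c : Ordinal,
        sInf {a : Ordinal | Stmt18.branch Lev x a ≠ Stmt18.branch Lev y a} = c + 1 := by
      rcases Ordinal.zero_or_succ_or_isSuccLimit
          (sInf {a : Ordinal | Stmt18.branch Lev x a ≠ Stmt18.branch Lev y a}) with
        h0 | ⟨c, hc⟩ | hlim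
      · exfalso
        apply hdS
        rw [h0, Stmt18.branch_zero, Stmt18.branch_zero]
      · exact ⟨c, by rw [← hc, Ordinal.add_one_eq_succ]⟩
      · exfalso
        apply hdS
        rw [Stmt18.branch_limit Lev x hlim, Stmt18.branch_limit Lev y hlim]
        exact Set.iInter₂_congr hdmin
    rw [hdc] at hdS hdmin
    have hIeq : Stmt18.branch Lev x c = Stmt18.branch Lev y c :=
      hdmin c (Stmt18.lt_add_one' c)
    have hyI : y ∈ Stmt18.branch Lev x c := hIeq ▸ Stmt18.mem_branch hpt y c
    have hxI : x ∈ Stmt18.branch Lev x c := Stmt18.mem_branch hpt x c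
    have hxc : Stmt18.branch Lev x c ≠ {x} := by
      intro h
      have hyI' := hyI
      rw [h] at hyI'
      exact hxy.ne' (Set.mem_singleton_iff.mp hyI')
    have hyc : Stmt18.branch Lev y c ≠ {y} := by
      intro h
      have hx' : x ∈ Stmt18.branch Lev y c := by rw [← hIeq]; exact hxI
      rw [h] at hx'
      exact hxy.ne (Set.mem_singleton_iff.mp hx')
    have hcρx : c < Stmt18.rho Lev x := by
      by_contra h
      push_neg at h
      exact hxc (Stmt18.branch_stab hpt x h (Stmt18.rho_lt hpt hchain x).2)
    have hcρy : c < Stmt18.rho Lev y := by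
      by_contra h
      push_neg at h
      exact hyc (Stmt18.branch_stab hpt y h (Stmt18.rho_lt hpt hchain y).2)
    have hdρx : c + 1 ≤ Stmt18.rho Lev x := Stmt18.add_one_le_iff'.mpr hcρx
    have hdρy : c + 1 ≤ Stmt18.rho Lev y := Stmt18.add_one_le_iff'.mpr hcρy
    obtain ⟨hl, hh, huni, hdis, hlne, hhne, hord⟩ :=
      Stmt18.splitAt_low_high Lev (Stmt18.branch_hasSplit hpt hcρx)
    have hbx : Stmt18.branch Lev x (c+1) =
        Stmt18.step Lev c (Stmt18.branch Lev x c) x := Stmt18.branch_succ_step hcρx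
    have hby : Stmt18.branch Lev y (c+1) =
        Stmt18.step Lev c (Stmt18.branch Lev x c) y := by
      rw [Stmt18.branch_succ_step hcρy, hIeq]
    have hxor : x ∈ Stmt18.low Lev c (Stmt18.branch Lev x c) ∨
        x ∈ Stmt18.high Lev c (Stmt18.branch Lev x c) := by
      rw [← Set.mem_union, huni]; exact hxI
    have hkey : x ∈ Stmt18.low Lev c (Stmt18.branch Lev x c) ∧
        y ∉ Stmt18.low Lev c (Stmt18.branch Lev x c) := by
      by_cases hxl : x ∈ Stmt18.low Lev c (Stmt18.branch Lev x c)
      · refine ⟨hxl, ?_⟩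
        intro hyl
        apply hdS
        rw [hbx, hby, Stmt18.step, Stmt18.step, if_pos hxl, if_pos hyl]
      · exfalso
        have hxh : x ∈ Stmt18.high Lev c (Stmt18.branch Lev x c) := hxor.resolve_left hxl
        by_cases hyl : y ∈ Stmt18.low Lev c (Stmt18.branch Lev x c)
        · exact absurd (hord y hyl x hxh) (not_lt.mpr hxy.le)
        · apply hdS
          rw [hbx, hby, Stmt18.step, Stmt18.step, if_neg hxl, if_neg hyl]
    obtain ⟨hxl, hyl⟩ := hkey
    have hml := Stmt18.split_m_lt hpt hΦ hcρx
    set m := max (Stmt18.uval Φ (Stmt18.low Lev c (Stmt18.branch Lev x c)))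
      (Stmt18.uval Φ (Stmt18.high Lev c (Stmt18.branch Lev x c))) with hm
    have hcase : ∀ e : Prop, (e →
          Stmt18.sval Lev Φ e c (Stmt18.branch Lev x c) x =
            m + (Stmt18.uval Φ (Stmt18.branch Lev x c) - m) / 3 ∧
          Stmt18.sval Lev Φ e c (Stmt18.branch Lev x c) y =
            m + 2 * (Stmt18.uval Φ (Stmt18.branch Lev x c) - m) / 3) ∧
        (¬ e →
          Stmt18.sval Lev Φ e c (Stmt18.branch Lev x c) x =
            m + 2 * (Stmt18.uval Φ (Stmt18.branch Lev x c) - m) / 3 ∧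
          Stmt18.sval Lev Φ e c (Stmt18.branch Lev x c) y =
            m + (Stmt18.uval Φ (Stmt18.branch Lev x c) - m) / 3) := by
      intro e
      constructor
      · intro he
        constructor
        · rw [Stmt18.sval, if_pos (iff_of_true hxl he)]
        · rw [Stmt18.sval, if_neg (fun hiff => hyl (hiff.mpr he))]
      · intro he
        constructor
        · rw [Stmt18.sval, if_neg (fun hiff => he (hiff.mp hxl))]
        · rw [Stmt18.sval, if_pos (iff_of_false hyl he)]
    have hlohi : m + (Stmt18.uval Φ (Stmt18.branch Lev x c) - m) / 3 <
        m + 2 * (Stmt18.uval Φ (Stmt18.branch Lev x c) - m) / 3 := by linarith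
    -- transfer the splitting level to the other universe of ordinals
    have hc1 : c + 1 < (Cardinal.aleph 1).ord := lt_of_le_of_lt hdρx hrhox.1
    obtain ⟨d₂, hd₂⟩ : ∃ a, Stmt18.corr (c+1) a :=
      Stmt18.corr_down_left Stmt18.corr_omega1 hc1.le
    have hvx : Stmt18.Psi2 Lev Φ x d₂ =
        Stmt18.sval Lev Φ (OrdEven d₂) c (Stmt18.branch Lev x c) x := by
      rw [Stmt18.psi2_corr Φ x hd₂, Stmt18.psi_succ Φ x _ hdρx]
    have hvy : Stmt18.Psi2 Lev Φ y d₂ =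
        Stmt18.sval Lev Φ (OrdEven d₂) c (Stmt18.branch Lev x c) y := by
      rw [Stmt18.psi2_corr Φ y hd₂, Stmt18.psi_succ Φ y _ hdρy, hIeq]
    have hvne : Stmt18.Psi2 Lev Φ x d₂ ≠ Stmt18.Psi2 Lev Φ y d₂ := by
      rw [hvx, hvy]
      by_cases he : OrdEven d₂
      · rw [((hcase _).1 he).1, ((hcase _).1 he).2]
        exact hlohi.ne
      · rw [((hcase _).2 he).1, ((hcase _).2 he).2]
        exact hlohi.ne'
    -- the sequences agree below the (transferred) splitting level
    have hagree : ∀ (e : Prop) (b : Ordinal), b < c + 1 →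
        Stmt18.Psi Lev Φ x e b = Stmt18.Psi Lev Φ y e b := by
      intro e b hb
      have hbc : b ≤ c := Stmt18.lt_add_one_iff'.mp hb
      have hbρx : b ≤ Stmt18.rho Lev x := hbc.trans hcρx.le
      have hbρy : b ≤ Stmt18.rho Lev y := hbc.trans hcρy.le
      by_cases hsb : ∃ b' : Ordinal, b' + 1 = b
      · obtain ⟨c', rfl⟩ := hsb
        have hc'b : c' < c + 1 := lt_trans (Stmt18.lt_add_one' c') hb
        have hc'ρx : c' < Stmt18.rho Lev x :=
          lt_of_lt_of_le (Stmt18.lt_add_one' c') hbρx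
        have hc'ρy : c' < Stmt18.rho Lev y :=
          lt_of_lt_of_le (Stmt18.lt_add_one' c') hbρy
        have heqc' : Stmt18.branch Lev x c' = Stmt18.branch Lev y c' := hdmin c' hc'b
        have hbb : Stmt18.branch Lev x (c'+1) = Stmt18.branch Lev y (c'+1) := hdmin _ hb
        rw [Stmt18.psi_succ Φ x e (Stmt18.add_one_le_iff'.mpr hc'ρx),
          Stmt18.psi_succ Φ y e (Stmt18.add_one_le_iff'.mpr hc'ρy), ← heqc']
        obtain ⟨hl', hh', huni', hdis', hlne', hhne', hord'⟩ :=
          Stmt18.splitAt_low_high Lev (Stmt18.branch_hasSplit hpt hc'ρx)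
        have hlh' : Stmt18.low Lev c' (Stmt18.branch Lev x c') ≠
            Stmt18.high Lev c' (Stmt18.branch Lev x c') := by
          intro e'
          obtain ⟨z, hz⟩ := hlne'
          have : z ∈ Stmt18.low Lev c' (Stmt18.branch Lev x c') ∩
              Stmt18.high Lev c' (Stmt18.branch Lev x c') := ⟨hz, e' ▸ hz⟩
          rw [hdis'] at this
          exact this
        have hbsx : Stmt18.branch Lev x (c'+1) =
            Stmt18.step Lev c' (Stmt18.branch Lev x c') x := Stmt18.branch_succ_step hc'ρx
        have hbsy : Stmt18.branch Lev y (c'+1) =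
            Stmt18.step Lev c' (Stmt18.branch Lev x c') y := by
          rw [Stmt18.branch_succ_step hc'ρy, heqc']
        have hxiff : (x ∈ Stmt18.low Lev c' (Stmt18.branch Lev x c')) ↔
            (y ∈ Stmt18.low Lev c' (Stmt18.branch Lev x c')) := by
          constructor
          · intro hx'
            by_contra hy'
            apply hlh'
            have e1 : Stmt18.branch Lev x (c'+1) =
                Stmt18.low Lev c' (Stmt18.branch Lev x c') := by
              rw [hbsx, Stmt18.step, if_pos hx']
            have e2 : Stmt18.branch Lev y (c'+1) =
                Stmt18.high Lev c' (Stmt18.branch Lev x c') := by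
              rw [hbsy, Stmt18.step, if_neg hy']
            rw [← e1, ← e2]
            exact hbb
          · intro hy'
            by_contra hx'
            apply hlh'
            have e1 : Stmt18.branch Lev y (c'+1) =
                Stmt18.low Lev c' (Stmt18.branch Lev x c') := by
              rw [hbsy, Stmt18.step, if_pos hy']
            have e2 : Stmt18.branch Lev x (c'+1) =
                Stmt18.high Lev c' (Stmt18.branch Lev x c') := by
              rw [hbsx, Stmt18.step, if_neg hx']
            rw [← e1, ← e2]
            exact hbb.symm
        rw [Stmt18.sval, Stmt18.sval]
        exact if_congr (iff_congr hxiff Iff.rfl) rfl rfl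
      · rw [Stmt18.psi_notsucc Φ x e hbρx hsb, Stmt18.psi_notsucc Φ y e hbρy hsb, hdmin b hb]
    have hagree₂ : ∀ a₂, a₂ < d₂ → Stmt18.Psi2 Lev Φ x a₂ = Stmt18.Psi2 Lev Φ y a₂ := by
      intro a₂ h₂
      obtain ⟨b', hb'⟩ : ∃ b', Stmt18.corr b' a₂ := Stmt18.corr_down_right hd₂ h₂.le
      have hbd : b' < c + 1 := (Stmt18.corr_lt_iff hb' hd₂).mpr h₂
      rw [Stmt18.psi2_corr Φ x hb', Stmt18.psi2_corr Φ y hb']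
      exact hagree (OrdEven a₂) b' hbd
    -- the first difference of the sequences is exactly d₂
    have hdord : dOrd (Stmt18.Psi2 Lev Φ x) (Stmt18.Psi2 Lev Φ y) = d₂ := by
      rw [dOrd]
      apply le_antisymm
      · exact csInf_le'
          (show d₂ ∈ {a | Stmt18.Psi2 Lev Φ x a ≠ Stmt18.Psi2 Lev Φ y a} from hvne)
      · apply le_csInf ⟨d₂, hvne⟩
        intro b hb
        by_contra hbl
        push_neg at hbl
        exact hb (hagree₂ b hbl)
    refine ⟨?_, ?_⟩
    · intro hfg
      exact hvne (congrFun hfg d₂)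
    · rw [hdord]
      by_cases he : OrdEven d₂
      · left
        refine ⟨he, ?_⟩
        rw [hvx, hvy, ((hcase _).1 he).1, ((hcase _).1 he).2]
        exact hlohi
      · right
        refine ⟨he, ?_⟩
        rw [hvx, hvy, ((hcase _).2 he).1, ((hcase _).2 he).2]
        exact hlohi
end
end

section
/- For every decreasing transfinite sequence (f_β)_{β<α} (α a countable ordinal) of nonnegative bounded upper semicontinuous functions on a Polish space X, the generalized alternating sum Σ*_{β<α} (−1)^β f_β is a Baire class 1 function. -/
open Ordinal Set

noncomputable section

/-- Baire class 1: a pointwise limit of continuous functions. -/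
def BaireClass1 {X : Type} [TopologicalSpace X] (f : X → ℝ) : Prop :=
  ∃ F : ℕ → X → ℝ, (∀ n, Continuous (F n)) ∧
    ∀ x, Filter.Tendsto (fun n => F n x) Filter.atTop (nhds (f x))

-- Parity lemmas
lemma ord_two_ne_zero : (2 : Ordinal) ≠ 0 := by norm_num

lemma ordMod2 (b : Ordinal) : b % 2 = 0 ∨ b % 2 = 1 := by
  have h : b % 2 < 2 := Ordinal.mod_lt b ord_two_ne_zero
  have h2 : (2 : Ordinal) = Order.succ 1 := by
    rw [← Ordinal.add_one_eq_succ]; norm_num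
  rw [h2, Order.lt_succ_iff] at h
  rw [← h2] at h
  rcases Ordinal.le_one_iff.mp h with h | h
  · exact Or.inl h
  · exact Or.inr h

lemma ordEven_zero : OrdEven 0 := Ordinal.zero_mod 2

lemma ordEven_iff {b : Ordinal} : OrdEven b ↔ ∃ q, b = 2 * q := by
  constructor
  · intro h
    exact ⟨b / 2, by conv_lhs => rw [← Ordinal.div_add_mod b 2]; rw [h, add_zero]⟩
  · rintro ⟨q, rfl⟩
    have := Ordinal.mul_add_mod_self 2 q 0
    simp only [OrdEven]
    simpa using this

lemma ordEven_two_mul (q : Ordinal) : OrdEven (2 * q) := ordEven_iff.mpr ⟨q, rfl⟩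

lemma not_ordEven_succ {b : Ordinal} (h : OrdEven b) : ¬ OrdEven (b + 1) := by
  obtain ⟨q, rfl⟩ := ordEven_iff.mp h
  have h1 : (2 * q + 1) % 2 = 1 % 2 := Ordinal.mul_add_mod_self 2 q 1
  have h2 : (1 : Ordinal) % 2 = 1 := Ordinal.mod_eq_of_lt (by norm_num)
  intro hc
  rw [OrdEven, h1, h2] at hc
  exact one_ne_zero hc

lemma odd_eq_even_succ {b : Ordinal} (h : ¬ OrdEven b) : ∃ e, OrdEven e ∧ b = e + 1 := by
  rcases ordMod2 b with h0 | h1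
  · exact absurd h0 h
  · refine ⟨2 * (b / 2), ordEven_two_mul _, ?_⟩
    conv_lhs => rw [← Ordinal.div_add_mod b 2]
    rw [h1]

lemma ordEven_limit {b : Ordinal} (h : Order.IsSuccLimit b) : OrdEven b := by
  rcases ordMod2 b with h0 | h1
  · exact h0
  · exfalso
    have hb : b = 2 * (b / 2) + 1 := by
      conv_lhs => rw [← Ordinal.div_add_mod b 2]
      rw [h1]
    have hlt : 2 * (b / 2) < b := by
      conv_rhs => rw [hb]
      exact lt_add_one _
    have := h.succ_lt hlt
    rw [← Ordinal.add_one_eq_succ, ← hb] at this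
    exact lt_irrefl _ this

lemma ordEven_succ_of_odd {b : Ordinal} (h : ¬ OrdEven b) : OrdEven (b + 1) := by
  obtain ⟨e, he, rfl⟩ := odd_eq_even_succ h
  obtain ⟨q, rfl⟩ := ordEven_iff.mp he
  have : 2 * q + 1 + 1 = 2 * (q + 1) := by
    rw [mul_add, mul_one, add_assoc]
    norm_num
  rw [this]
  exact ordEven_two_mul _

-- Baire class 1 basics
lemma b1_add {X : Type} [TopologicalSpace X] {u v : X → ℝ}
    (hu : BaireClass1 u) (hv : BaireClass1 v) : BaireClass1 (fun x => u x + v x) := by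
  obtain ⟨F, hF, hFt⟩ := hu
  obtain ⟨G, hG, hGt⟩ := hv
  exact ⟨fun n x => F n x + G n x, fun n => (hF n).add (hG n),
    fun x => (hFt x).add (hGt x)⟩

lemma b1_sub {X : Type} [TopologicalSpace X] {u v : X → ℝ}
    (hu : BaireClass1 u) (hv : BaireClass1 v) : BaireClass1 (fun x => u x - v x) := by
  obtain ⟨F, hF, hFt⟩ := hu
  obtain ⟨G, hG, hGt⟩ := hv
  exact ⟨fun n x => F n x - G n x, fun n => (hF n).sub (hG n),
    fun x => (hFt x).sub (hGt x)⟩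

-- Cov: countable closed covers with small oscillation
def Cov {X : Type} [TopologicalSpace X] (h : X → ℝ) : Prop :=
  ∀ ε : ℝ, 0 < ε → ∃ C : ℕ → Set X, (∀ n, IsClosed (C n)) ∧ (∀ x, ∃ n, x ∈ C n) ∧
    ∀ n, ∀ x ∈ C n, ∀ y ∈ C n, |h x - h y| ≤ ε

lemma cov_of_countable {X : Type} [TopologicalSpace X] (h : X → ℝ)
    (H : ∀ ε : ℝ, 0 < ε → ∃ (ι : Type) (_ : Countable ι) (C : ι → Set X),
      (∀ n, IsClosed (C n)) ∧ (∀ x, ∃ n, x ∈ C n) ∧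
      ∀ n, ∀ x ∈ C n, ∀ y ∈ C n, |h x - h y| ≤ ε) : Cov h := by
  intro ε hε
  obtain ⟨ι, hcount, C, hcl, hcov, hosc⟩ := H ε hε
  by_cases hX : Nonempty X
  · obtain ⟨x0⟩ := hX
    obtain ⟨n0, _⟩ := hcov x0
    have : Nonempty ι := ⟨n0⟩
    obtain ⟨s, hs⟩ := exists_surjective_nat ι
    refine ⟨fun n => C (s n), fun n => hcl _, fun x => ?_, fun n => hosc _⟩
    obtain ⟨i, hi⟩ := hcov x
    obtain ⟨n, rfl⟩ := hs i
    exact ⟨n, hi⟩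
  · exact ⟨fun _ => ∅, fun _ => isClosed_empty,
      fun x => absurd ⟨x⟩ hX, fun n x hx => absurd hx (Set.notMem_empty x)⟩

lemma cov_congr {X : Type} [TopologicalSpace X] {h g : X → ℝ}
    (hg : ∀ x, h x = g x) (hc : Cov h) : Cov g := by
  intro ε hε
  obtain ⟨C, h1, h2, h3⟩ := hc ε hε
  exact ⟨C, h1, h2, fun n x hx y hy => by rw [← hg x, ← hg y]; exact h3 n x hx y hy⟩

lemma cov_zero {X : Type} [TopologicalSpace X] : Cov (fun _ : X => (0:ℝ)) := by
  intro ε hε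
  exact ⟨fun _ => univ, fun _ => isClosed_univ, fun x => ⟨0, mem_univ x⟩,
    fun n x _ y _ => by simp [hε.le]⟩

lemma cov_add {X : Type} [TopologicalSpace X] {u v : X → ℝ}
    (hu : Cov u) (hv : Cov v) : Cov (fun x => u x + v x) := by
  apply cov_of_countable
  intro ε hε
  obtain ⟨C, hC1, hC2, hC3⟩ := hu (ε/2) (by linarith)
  obtain ⟨D, hD1, hD2, hD3⟩ := hv (ε/2) (by linarith)
  refine ⟨ℕ × ℕ, inferInstance, fun p => C p.1 ∩ D p.2,
    fun p => (hC1 p.1).inter (hD1 p.2), fun x => ?_, ?_⟩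
  · obtain ⟨n, hn⟩ := hC2 x; obtain ⟨m, hm⟩ := hD2 x
    exact ⟨(n, m), hn, hm⟩
  · rintro ⟨n, m⟩ x ⟨hx1, hx2⟩ y ⟨hy1, hy2⟩
    have := hC3 n x hx1 y hy1
    have := hD3 m x hx2 y hy2
    have : |u x + v x - (u y + v y)| ≤ |u x - u y| + |v x - v y| := by
      rw [show u x + v x - (u y + v y) = (u x - u y) + (v x - v y) by ring]
      exact abs_add_le _ _
    linarith [hC3 n x hx1 y hy1, hD3 m x hx2 y hy2]

lemma cov_neg {X : Type} [TopologicalSpace X] {u : X → ℝ}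
    (hu : Cov u) : Cov (fun x => -u x) := by
  intro ε hε
  obtain ⟨C, h1, h2, h3⟩ := hu ε hε
  refine ⟨C, h1, h2, fun n x hx y hy => ?_⟩
  have := h3 n x hx y hy
  rw [show -u x - -u y = -(u x - u y) by ring, abs_neg]
  exact this

lemma cov_sub {X : Type} [TopologicalSpace X] {u v : X → ℝ}
    (hu : Cov u) (hv : Cov v) : Cov (fun x => u x - v x) := by
  have := cov_add hu (cov_neg hv)
  exact cov_congr (fun x => by ring) this

-- open sets are countable unions of closed sets in metric spaces
lemma open_eq_iUnion_closed {X : Type} [MetricSpace X] (U : Set X) (hU : IsOpen U) :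
    ∃ D : ℕ → Set X, (∀ m, IsClosed (D m)) ∧ (∀ m, D m ⊆ U) ∧ ∀ x ∈ U, ∃ m, x ∈ D m := by
  refine ⟨fun m => {x | ∀ y ∉ U, 1/(m+1 : ℝ) ≤ dist x y}, ?_, ?_, ?_⟩
  · intro m
    have : {x | ∀ y ∉ U, 1/(m+1 : ℝ) ≤ dist x y} =
        ⋂ (y : X) (_ : y ∉ U), {x | 1/(m+1 : ℝ) ≤ dist x y} := by
      ext x; simp [mem_iInter]
    simp only []
    rw [this]
    exact isClosed_iInter fun y => isClosed_iInter fun _ =>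
      isClosed_le continuous_const (by fun_prop)
  · intro m x hx
    by_contra hxU
    have := hx x hxU
    simp at this
    have : (0:ℝ) < 1/(m+1:ℝ) := by positivity
    linarith [hx x hxU, dist_self x]
  · intro x hx
    obtain ⟨δ, hδ, hball⟩ := Metric.isOpen_iff.mp hU x hx
    obtain ⟨m, hm⟩ := exists_nat_one_div_lt hδ
    refine ⟨m, fun y hy => ?_⟩
    by_contra hlt
    push_neg at hlt
    exact hy (hball (by rw [Metric.mem_ball, dist_comm]; linarith))

-- USC nonneg functions have Cov
lemma cov_usc {X : Type} [MetricSpace X] {f : X → ℝ} (husc : USC f)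
    (hnn : ∀ x, 0 ≤ f x) : Cov f := by
  apply cov_of_countable
  intro ε hε
  have hopen : ∀ k : ℕ, IsOpen {x | f x < (k+1) * ε} := by
    intro k
    exact husc ((k+1) * ε)
  choose D hD1 hD2 hD3 using fun k => open_eq_iUnion_closed _ (hopen k)
  refine ⟨ℕ × ℕ, inferInstance, fun p => D p.1 p.2 ∩ {x | (p.1 : ℝ) * ε ≤ f x},
    ?_, ?_, ?_⟩
  · rintro ⟨k, m⟩
    refine (hD1 k m).inter ?_
    have : {x | (k : ℝ) * ε ≤ f x} = (f ⁻¹' Set.Iio ((k:ℝ) * ε))ᶜ := by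
      ext x; simp [not_lt]
    rw [this]
    exact (husc _).isClosed_compl
  · intro x
    set k := Nat.floor (f x / ε) with hk
    have h1 : (k : ℝ) * ε ≤ f x := by
      have := Nat.floor_le (div_nonneg (hnn x) hε.le)
      calc (k:ℝ) * ε ≤ (f x / ε) * ε := by nlinarith
        _ = f x := by field_simp
    have h2 : f x < (k+1) * ε := by
      have := Nat.lt_floor_add_one (f x / ε)
      calc f x = (f x / ε) * ε := by field_simp
        _ < (k+1) * ε := by
            apply mul_lt_mul_of_pos_right _ hε
            push_cast
            exact this
    obtain ⟨m, hm⟩ := hD3 k x h2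
    exact ⟨(k, m), hm, h1⟩
  · rintro ⟨k, m⟩ x ⟨hx1, hx2⟩ y ⟨hy1, hy2⟩
    have hxu : f x < (k+1) * ε := hD2 k m hx1
    have hyu : f y < (k+1) * ε := hD2 k m hy1
    rw [abs_le]
    constructor <;> [skip; skip] <;>
      · simp only [mem_setOf_eq] at hx2 hy2
        push_cast at hxu hyu ⊢
        nlinarith

section Sandwich

variable {X : Type} [TopologicalSpace X]
variable {a : Ordinal} {f : Ordinal → X → ℝ} {S : Ordinal → X → ℝ}

lemma sandwich
    (hnn : ∀ b, b < a → ∀ x, 0 ≤ f b x)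
    (hdec : ∀ b c, b ≤ c → c < a → ∀ x, f c x ≤ f b x)
    (hS0 : S 0 = fun _ => 0)
    (hSsuccEven : ∀ b : Ordinal, b + 1 ≤ a → OrdEven b →
      S (b + 1) = fun x => S b x + f b x)
    (hSsuccOdd : ∀ b : Ordinal, b + 1 ≤ a → ¬ OrdEven b →
      S (b + 1) = fun x => S b x - f b x)
    (hSlim : ∀ b : Ordinal, b ≤ a → Order.IsSuccLimit b →
      ∀ x, S b x = sSup {y : ℝ | ∃ c, c < b ∧ OrdEven c ∧ y = S c x}) :
    ∀ b' : Ordinal, b' ≤ a → OrdEven b' → ∀ b ≤ b', OrdEven b → ∀ x,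
      S b x ≤ S b' x ∧ (b' < a → S b' x ≤ S b x + f b x - f b' x) := by
  intro b'
  induction b' using Ordinal.induction with
  | h b' IH =>
    intro hb'a hb'e b hb hbe x
    rcases eq_or_lt_of_le hb with rfl | hlt
    · exact ⟨le_refl _, fun hba => by
        have := hnn b hba x
        linarith⟩
    rcases Ordinal.zero_or_succ_or_isSuccLimit b' with h0 | ⟨c, rfl⟩ | hlim
    · exact absurd (h0 ▸ hlt) (not_lt_of_ge (zero_le (a := b)))
    · -- successor case : b' = c + 1 with c odd, c = e + 1 with e even
      simp only [← Ordinal.add_one_eq_succ] at hb'a hb'e hb hlt IH ⊢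
      have hcodd : ¬ OrdEven c := by
        intro hce
        exact (not_ordEven_succ hce) hb'e
      obtain ⟨e, hee, rfl⟩ := odd_eq_even_succ hcodd
      have he1a : e + 1 + 1 ≤ a := hb'a
      have hea : e < a := lt_of_lt_of_le
        (lt_trans (lt_add_one e) (lt_add_one (e+1))) hb'a
      have he1lta : e + 1 < a := lt_of_lt_of_le (lt_add_one (e+1)) hb'a
      -- S (e+1+1) = S e + f e - f (e+1)
      have hS1 : S (e + 1) = fun x => S e x + f e x :=
        hSsuccEven e (le_of_lt he1lta) hee
      have hS2 : S (e + 1 + 1) = fun x => S (e+1) x - f (e+1) x := by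
        apply hSsuccOdd (e+1) hb'a
        exact not_ordEven_succ hee
      have hval : S (e+1+1) x = S e x + f e x - f (e+1) x := by
        rw [hS2]; simp only []; rw [hS1]
      -- b ≤ e
      have hble : b ≤ e := by
        have h1 : b < e + 1 + 1 := hlt
        have h2 : b ≤ e + 1 := by
          rw [Ordinal.add_one_eq_succ (e+1)] at h1
          exact Order.lt_succ_iff.mp h1
        rcases eq_or_lt_of_le h2 with rfl | h3
        · exact absurd hbe (not_ordEven_succ hee)
        · rw [Ordinal.add_one_eq_succ e] at h3
          exact Order.lt_succ_iff.mp h3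
      have IHe := IH e (lt_trans (lt_add_one e) (lt_add_one (e+1))) hea.le hee b hble hbe x
      have hfe1 : f (e+1) x ≤ f e x := hdec e (e+1) (le_of_lt (lt_add_one e)) he1lta x
      constructor
      · rw [hval]
        have := IHe.1
        linarith
      · intro hb'lta
        rw [hval]
        have hup := IHe.2 hea
        have : f (e+1+1) x ≤ f (e+1) x := hdec (e+1) (e+1+1) (le_of_lt (lt_add_one _)) hb'lta x
        linarith
    · -- limit case
      have hba : b < a := lt_of_lt_of_le hlt hb'a
      have hbdd : ∀ c, c < b' → OrdEven c → S c x ≤ S b x + f b x := by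
        intro c hc hce
        rcases le_or_gt b c with hbc | hcb
        · have := (IH c hc (le_trans hc.le hb'a) hce b hbc hbe x).2 (lt_of_lt_of_le hc hb'a)
          have hnc := hnn c (lt_of_lt_of_le hc hb'a) x
          linarith
        · have := (IH b hlt hba.le hbe c hcb.le hce x).1
          have hnb := hnn b hba x
          linarith
      have hSb' : S b' x = sSup {y : ℝ | ∃ c, c < b' ∧ OrdEven c ∧ y = S c x} :=
        hSlim b' hb'a hlim x
      have hne : {y : ℝ | ∃ c, c < b' ∧ OrdEven c ∧ y = S c x}.Nonempty :=
        ⟨S b x, b, hlt, hbe, rfl⟩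
      have hbdd2 : BddAbove {y : ℝ | ∃ c, c < b' ∧ OrdEven c ∧ y = S c x} := by
        refine ⟨S b x + f b x, ?_⟩
        rintro y ⟨c, hc, hce, rfl⟩
        exact hbdd c hc hce
      constructor
      · rw [hSb']
        exact le_csSup hbdd2 ⟨b, hlt, hbe, rfl⟩
      · intro hb'lta
        rw [hSb']
        apply csSup_le hne
        rintro y ⟨c, hc, hce, rfl⟩
        have hfb' : f b' x ≤ f c x := hdec c b' hc.le hb'lta x
        rcases le_or_gt b c with hbc | hcb
        · have := (IH c hc (le_trans hc.le hb'a) hce b hbc hbe x).2 (lt_of_lt_of_le hc hb'a)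
          linarith
        · have := (IH b hlt hba.le hbe c hcb.le hce x).1
          have hfbb' : f b' x ≤ f b x := hdec b b' hlt.le hb'lta x
          linarith

end Sandwich

lemma countable_Iio_of_lt_aleph1 {b : Ordinal} (hb : b < (Cardinal.aleph 1).ord) :
    (Set.Iio b).Countable := by
  rw [Cardinal.countable_iff_lt_aleph_one, Ordinal.mk_Iio_ordinal, ← not_le,
    Cardinal.aleph_one_le_lift, not_le]
  exact Cardinal.lt_ord.mp hb

section CovS

variable {X : Type} [MetricSpace X]

lemma cov_S {a : Ordinal} {f S : Ordinal → X → ℝ}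
    (ha : a < (Cardinal.aleph 1).ord)
    (husc : ∀ b, b < a → USC (f b))
    (hnn : ∀ b, b < a → ∀ x, 0 ≤ f b x)
    (hdec : ∀ b c, b ≤ c → c < a → ∀ x, f c x ≤ f b x)
    (hS0 : S 0 = fun _ => 0)
    (hSsuccEven : ∀ b : Ordinal, b + 1 ≤ a → OrdEven b →
      S (b + 1) = fun x => S b x + f b x)
    (hSsuccOdd : ∀ b : Ordinal, b + 1 ≤ a → ¬ OrdEven b →
      S (b + 1) = fun x => S b x - f b x)
    (hSlim : ∀ b : Ordinal, b ≤ a → Order.IsSuccLimit b →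
      ∀ x, S b x = sSup {y : ℝ | ∃ c, c < b ∧ OrdEven c ∧ y = S c x}) :
    ∀ b, b ≤ a → Cov (S b) := by
  have hsand := sandwich (X := X) hnn hdec hS0 hSsuccEven hSsuccOdd hSlim
  intro b
  induction b using Ordinal.induction with
  | h b IH =>
    intro hba
    rcases Ordinal.zero_or_succ_or_isSuccLimit b with rfl | ⟨c, rfl⟩ | hlim
    · exact cov_congr (fun x => by rw [hS0]) cov_zero
    · simp only [← Ordinal.add_one_eq_succ] at *
      have hca : c < a := lt_of_lt_of_le (lt_add_one c) hba
      have hIHc : Cov (S c) := IH c (lt_add_one c) hca.le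
      have hcovf : Cov (f c) := cov_usc (husc c hca) (hnn c hca)
      by_cases hce : OrdEven c
      · exact cov_congr (fun x => by rw [hSsuccEven c hba hce]) (cov_add hIHc hcovf)
      · exact cov_congr (fun x => by rw [hSsuccOdd c hba hce]) (cov_sub hIHc hcovf)
    · -- limit case
      apply cov_of_countable
      intro ε hε
      set δ := ε / 3 with hδdef
      have hδ : 0 < δ := by positivity
      have hcnt : (Set.Iio b).Countable :=
        countable_Iio_of_lt_aleph1 (lt_of_le_of_lt hba ha)
      have hne : (Set.Iio b).Nonempty := ⟨0, hlim.pos⟩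
      haveI : Countable ↥(Set.Iio b) := hcnt.to_subtype
      haveI : Nonempty ↥(Set.Iio b) := hne.to_subtype
      obtain ⟨σ, hσ⟩ := exists_surjective_nat ↥(Set.Iio b)
      classical
      set e : ℕ → Ordinal := fun n =>
        if OrdEven (σ n).1 then (σ n).1 else (σ n).1 + 1 with hedef
      have helt : ∀ n, e n < b := by
        intro n
        simp only [hedef]
        by_cases h : OrdEven (σ n).1
        · rw [if_pos h]; exact (σ n).2
        · rw [if_neg h, Ordinal.add_one_eq_succ]
          exact hlim.succ_lt (σ n).2
      have heven : ∀ n, OrdEven (e n) := by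
        intro n
        simp only [hedef]
        by_cases h : OrdEven (σ n).1
        · rw [if_pos h]; exact h
        · rw [if_neg h]; exact ordEven_succ_of_odd h
      have hege : ∀ n, (σ n).1 ≤ e n := by
        intro n
        simp only [hedef]
        by_cases h : OrdEven (σ n).1
        · rw [if_pos h]
        · rw [if_neg h]; exact (lt_add_one _).le
      have hea : ∀ n, e n < a := fun n => lt_of_lt_of_le (helt n) hba
      -- the infimum function g
      set g : X → ℝ := fun x => sInf {r : ℝ | ∃ c, c < b ∧ r = f c x} with hgdef
      have hgset_ne : ∀ x, {r : ℝ | ∃ c, c < b ∧ r = f c x}.Nonempty :=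
        fun x => ⟨f 0 x, 0, hlim.pos, rfl⟩
      have hgbdd : ∀ x, BddBelow {r : ℝ | ∃ c, c < b ∧ r = f c x} := by
        intro x
        refine ⟨0, ?_⟩
        rintro r ⟨c, hc, rfl⟩
        exact hnn c (lt_of_lt_of_le hc hba) x
      have hgle : ∀ x, ∀ c, c < b → g x ≤ f c x :=
        fun x c hc => csInf_le (hgbdd x) ⟨c, hc, rfl⟩
      -- the closed level sets of g
      set K : ℕ → Set X := fun k => {x | ∀ c, c < b → (k:ℝ) * δ ≤ f c x} with hKdef
      have hKcl : ∀ k, IsClosed (K k) := by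
        intro k
        have hKeq : K k = ⋂ (c : Ordinal) (_ : c < b), {x | (k:ℝ) * δ ≤ f c x} := by
          ext x; simp [hKdef, mem_iInter]
        rw [hKeq]
        refine isClosed_iInter fun c => isClosed_iInter fun hc => ?_
        have : {x | (k:ℝ)*δ ≤ f c x} = (f c ⁻¹' Set.Iio ((k:ℝ)*δ))ᶜ := by
          ext x; simp [not_lt]
        rw [this]
        exact (husc c (lt_of_lt_of_le hc hba) ((k:ℝ)*δ)).isClosed_compl
      have hKg : ∀ k x, x ∈ K k → (k:ℝ) * δ ≤ g x := by
        intro k x h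
        apply le_csInf (hgset_ne x)
        rintro r ⟨c, hc, rfl⟩
        exact h c hc
      -- covers of the S (e n) from the induction hypothesis
      have hcovSe : ∀ n, ∃ C : ℕ → Set X, (∀ i, IsClosed (C i)) ∧ (∀ x, ∃ i, x ∈ C i) ∧
          ∀ i, ∀ x ∈ C i, ∀ y ∈ C i, |S (e n) x - S (e n) y| ≤ δ :=
        fun n => IH (e n) (helt n) (hea n).le δ hδ
      choose C hCcl hCcov hCosc using hcovSe
      -- Fσ decompositions of the open sets {f (e n) < (k+1) δ}
      have hUopen : ∀ (p : ℕ × ℕ), IsOpen {x | f (e p.1) x < ((p.2:ℝ)+1) * δ} := by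
        intro p
        exact husc (e p.1) (hea p.1) _
      choose D hDcl hDsub hDcov using fun (p : ℕ × ℕ) => open_eq_iUnion_closed _ (hUopen p)
      -- tail estimate
      have htail : ∀ n k (x : X), f (e n) x < ((k:ℝ)+1) * δ → (k:ℝ) * δ ≤ g x →
          |S b x - S (e n) x| ≤ δ := by
        intro n k x hfx hgx
        have hSlimx : S b x = sSup {y : ℝ | ∃ c, c < b ∧ OrdEven c ∧ y = S c x} :=
          hSlim b hba hlim x
        have hAne : {y : ℝ | ∃ c, c < b ∧ OrdEven c ∧ y = S c x}.Nonempty :=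
          ⟨S (e n) x, e n, helt n, heven n, rfl⟩
        have hub : ∀ y ∈ {y : ℝ | ∃ c, c < b ∧ OrdEven c ∧ y = S c x},
            y ≤ S (e n) x + f (e n) x - g x := by
          rintro y ⟨c, hc, hce, rfl⟩
          have hca' : c < a := lt_of_lt_of_le hc hba
          rcases le_or_gt (e n) c with hec | hce2
          · have := (hsand c hca'.le hce (e n) hec (heven n) x).2 hca'
            have hgc := hgle x c hc
            linarith
          · have := (hsand (e n) (hea n).le (heven n) c hce2.le hce x).1
            have hgen := hgle x (e n) (helt n)
            linarith
        have hup : S b x ≤ S (e n) x + f (e n) x - g x := by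
          rw [hSlimx]
          exact csSup_le hAne hub
        have hlo : S (e n) x ≤ S b x := by
          rw [hSlimx]
          refine le_csSup ⟨S (e n) x + f (e n) x - g x, ?_⟩ ⟨e n, helt n, heven n, rfl⟩
          rintro y hy
          exact hub y hy
        rw [abs_le]
        constructor <;> nlinarith
      -- assemble the cover
      refine ⟨ℕ × ℕ × ℕ × ℕ, inferInstance,
        fun q => D (q.1, q.2.1) q.2.2.1 ∩ K q.2.1 ∩ C q.1 q.2.2.2, ?_, ?_, ?_⟩
      · rintro ⟨n, k, m, i⟩
        exact ((hDcl (n,k) m).inter (hKcl k)).inter (hCcl n i)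
      · intro x
        have hgnn : 0 ≤ g x := by
          apply le_csInf (hgset_ne x)
          rintro r ⟨c, hc, rfl⟩
          exact hnn c (lt_of_lt_of_le hc hba) x
        set k := Nat.floor (g x / δ) with hk
        have h1 : (k : ℝ) * δ ≤ g x := by
          have := Nat.floor_le (div_nonneg hgnn hδ.le)
          calc (k:ℝ) * δ ≤ (g x / δ) * δ := by nlinarith
            _ = g x := by field_simp
        have h2 : g x < ((k:ℝ)+1) * δ := by
          have := Nat.lt_floor_add_one (g x / δ)
          calc g x = (g x / δ) * δ := by field_simp
            _ < ((k:ℝ)+1) * δ := by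
                apply mul_lt_mul_of_pos_right _ hδ
                exact_mod_cast this
        -- find c < b with f c x < (k+1) δ
        obtain ⟨r, ⟨c, hc, rfl⟩, hrlt⟩ :=
          (csInf_lt_iff (hgbdd x) (hgset_ne x)).mp (lt_of_le_of_lt (le_refl (g x)) h2)
        obtain ⟨n, hn⟩ := hσ ⟨c, hc⟩
        have hcen : c ≤ e n := by
          have h' := hege n
          rw [hn] at h'
          exact h'
        have hfen : f (e n) x < ((k:ℝ)+1) * δ := by
          have := hdec c (e n) hcen (hea n) x
          linarith
        obtain ⟨m, hm⟩ := hDcov (n, k) x hfen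
        obtain ⟨i, hi⟩ := hCcov n x
        refine ⟨(n, k, m, i), ⟨hm, ?_⟩, hi⟩
        intro c' hc'
        exact le_trans h1 (hgle x c' hc')
      · rintro ⟨n, k, m, i⟩ x ⟨⟨hxD, hxK⟩, hxC⟩ y ⟨⟨hyD, hyK⟩, hyC⟩
        have hfx : f (e n) x < ((k:ℝ)+1) * δ := hDsub (n,k) m hxD
        have hfy : f (e n) y < ((k:ℝ)+1) * δ := hDsub (n,k) m hyD
        have htx := htail n k x hfx (hKg k x hxK)
        have hty := htail n k y hfy (hKg k y hyK)
        have hosc := hCosc n i x hxC y hyC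
        have : |S b x - S b y| ≤ |S b x - S (e n) x| + |S (e n) x - S (e n) y|
            + |S (e n) y - S b y| := by
          have h1 : S b x - S b y = (S b x - S (e n) x) + (S (e n) x - S (e n) y)
              + (S (e n) y - S b y) := by ring
          rw [h1]
          exact le_trans (abs_add_le _ _) (by linarith [abs_add_le (S b x - S (e n) x) (S (e n) x - S (e n) y)])
        have habs : |S (e n) y - S b y| = |S b y - S (e n) y| := abs_sub_comm _ _
        rw [habs] at this
        rw [hδdef] at htx hty hosc
        linarith
  
end CovS

section Approx

open Filter Topology Metric

set_option maxHeartbeats 1000000 in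
lemma b1_approx_of_cov {X : Type} [MetricSpace X] (h : X → ℝ) (M ε : ℝ) (hε : 0 < ε)
    (hM : ∀ x, |h x| ≤ M) (C : ℕ → Set X) (hcl : ∀ n, IsClosed (C n))
    (hne : ∀ n, (C n).Nonempty) (hcov : ∀ x, ∃ n, x ∈ C n)
    (hosc : ∀ n, ∀ x ∈ C n, ∀ y ∈ C n, |h x - h y| ≤ ε) :
    ∃ u : X → ℝ, BaireClass1 u ∧ ∀ x, |h x - u x| ≤ ε := by
  classical
  have hM0 : 0 ≤ M := le_trans (abs_nonneg _) (hM (hne 0).some)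
  set c : ℕ → ℝ := fun j => h (hne j).some with hc
  have hcmem : ∀ j, (hne j).some ∈ C j := fun j => (hne j).some_mem
  have hcM : ∀ j, |c j| ≤ M := fun j => hM _
  set w : ℕ → X → ℝ := fun j x => (if x ∈ C j then 1 else 0) * (2⁻¹:ℝ)^j with hw
  have hw_nonneg : ∀ j x, 0 ≤ w j x := by
    intro j x
    by_cases hx : x ∈ C j <;> simp [hw, hx]
  have hw_le : ∀ j x, w j x ≤ (2⁻¹:ℝ)^j := by
    intro j x
    by_cases hx : x ∈ C j
    · simp [hw, hx]
    · simp only [hw, if_neg hx, zero_mul]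
      positivity
  have hsum_geom : Summable (fun j : ℕ => ((2:ℝ)⁻¹)^j) :=
    summable_geometric_of_lt_one (by norm_num) (by norm_num)
  have hsumw : ∀ x, Summable (fun j => w j x) := fun x =>
    Summable.of_nonneg_of_le (fun j => hw_nonneg j x) (fun j => hw_le j x) hsum_geom
  have hsumcw : ∀ x, Summable (fun j => c j * w j x) := by
    intro x
    apply Summable.of_norm_bounded (hsum_geom.mul_left M)
    intro j
    rw [norm_mul]
    apply mul_le_mul (by simpa using hcM j) (by
      rw [Real.norm_eq_abs, abs_of_nonneg (hw_nonneg j x)]; exact hw_le j x)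
      (norm_nonneg _) hM0
  set Den : X → ℝ := fun x => ∑' j, w j x with hDen
  set Num : X → ℝ := fun x => ∑' j, c j * w j x with hNum
  have hDenpos : ∀ x, 0 < Den x := by
    intro x
    obtain ⟨j₀, hj₀⟩ := hcov x
    have h1 : w j₀ x ≤ Den x := Summable.le_tsum (hsumw x) j₀ (fun i _ => hw_nonneg i x)
    have h2 : (0:ℝ) < w j₀ x := by
      simp only [hw, if_pos hj₀, one_mul]
      positivity
    linarith
  refine ⟨fun x => Num x / Den x, ?_, ?_⟩
  · -- Baire class 1
    set W : ℕ → ℕ → X → ℝ :=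
      fun j n x => max 0 (1 - n * Metric.infDist x (C j)) * (2⁻¹:ℝ)^j with hW
    have hWcont : ∀ j n, Continuous (fun x => W j n x) := by
      intro j n
      apply Continuous.mul _ continuous_const
      exact continuous_const.max (continuous_const.sub
        (continuous_const.mul (Metric.continuous_infDist_pt (C j))))
    have hW_nonneg : ∀ j n x, 0 ≤ W j n x := by
      intro j n x
      apply mul_nonneg (le_max_left _ _) (by positivity)
    have hW_le : ∀ j n x, W j n x ≤ (2⁻¹:ℝ)^j := by
      intro j n x
      have : max 0 (1 - n * Metric.infDist x (C j)) ≤ 1 := by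
        apply max_le (by norm_num)
        have : 0 ≤ (n:ℝ) * Metric.infDist x (C j) :=
          mul_nonneg (by positivity) Metric.infDist_nonneg
        linarith
      calc W j n x ≤ 1 * (2⁻¹:ℝ)^j := by
            apply mul_le_mul_of_nonneg_right this (by positivity)
        _ = (2⁻¹:ℝ)^j := one_mul _
    have hWlim : ∀ j x, Filter.Tendsto (fun n => W j n x) atTop (𝓝 (w j x)) := by
      intro j x
      by_cases hx : x ∈ C j
      · have : ∀ n, W j n x = w j x := by
          intro n
          simp [hW, hw, hx, Metric.infDist_zero_of_mem hx]
        simp only [this]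
        exact tendsto_const_nhds
      · have hd : 0 < Metric.infDist x (C j) :=
          ((hcl j).notMem_iff_infDist_pos (hne j)).mp hx
        have : ∀ᶠ n in atTop, W j n x = w j x := by
          obtain ⟨N, hN⟩ := exists_nat_gt (1 / Metric.infDist x (C j))
          refine Filter.eventually_atTop.mpr ⟨N, fun n hn => ?_⟩
          have h1 : 1 / Metric.infDist x (C j) < (n:ℝ) :=
            lt_of_lt_of_le hN (by exact_mod_cast hn)
          have h2 : 1 < (n:ℝ) * Metric.infDist x (C j) := by
            rw [div_lt_iff₀ hd] at h1
            linarith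
          simp [hW, hw, hx, max_eq_left (by linarith : 1 - (n:ℝ) * Metric.infDist x (C j) ≤ 0)]
        refine Filter.Tendsto.congr' ?_ tendsto_const_nhds
        filter_upwards [this] with n hn using hn.symm
    set G : ℕ → X → ℝ := fun n x =>
      (∑ j ∈ Finset.range n, c j * W j n x) /
      ((2⁻¹:ℝ)^n + ∑ j ∈ Finset.range n, W j n x) with hG
    have hGden_pos : ∀ n x, 0 < (2⁻¹:ℝ)^n + ∑ j ∈ Finset.range n, W j n x := by
      intro n x
      have : 0 ≤ ∑ j ∈ Finset.range n, W j n x :=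
        Finset.sum_nonneg (fun j _ => hW_nonneg j n x)
      positivity
    refine ⟨G, ?_, ?_⟩
    · intro n
      apply Continuous.div
      · exact continuous_finset_sum _ (fun j _ => continuous_const.mul (hWcont j n))
      · exact continuous_const.add (continuous_finset_sum _ (fun j _ => hWcont j n))
      · intro x
        exact ne_of_gt (hGden_pos n x)
    · intro x
      -- numerator convergence via Tannery
      have hnum : Filter.Tendsto (fun n => ∑ j ∈ Finset.range n, c j * W j n x)
          atTop (𝓝 (Num x)) := by
        have hts : ∀ n, (∑' j, (if j < n then c j * W j n x else 0))
            = ∑ j ∈ Finset.range n, c j * W j n x := by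
          intro n
          rw [tsum_eq_sum (s := Finset.range n) (fun j hj => if_neg (by simpa using hj))]
          exact Finset.sum_congr rfl (fun j hj => if_pos (Finset.mem_range.mp hj))
        have := tendsto_tsum_of_dominated_convergence
          (f := fun n j => if j < n then c j * W j n x else 0)
          (g := fun j => c j * w j x)
          (bound := fun j => M * (2⁻¹:ℝ)^j)
          (𝓕 := atTop) (hsum_geom.mul_left M) ?_ ?_
        · exact Filter.Tendsto.congr (fun n => hts n) this
        · intro j
          apply Filter.Tendsto.congr' _ (hWlim j x |>.const_mul (c j))
          filter_upwards [Filter.eventually_gt_atTop j] with n hn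
          rw [if_pos hn]
        · filter_upwards with n
          intro j
          by_cases hj : j < n
          · rw [if_pos hj, norm_mul]
            apply mul_le_mul (by simpa using hcM j)
              (by rw [Real.norm_eq_abs, abs_of_nonneg (hW_nonneg j n x)]; exact hW_le j n x)
              (norm_nonneg _) hM0
          · rw [if_neg hj, norm_zero]
            exact mul_nonneg hM0 (by positivity)
      have hden : Filter.Tendsto (fun n => (2⁻¹:ℝ)^n + ∑ j ∈ Finset.range n, W j n x)
          atTop (𝓝 (Den x)) := by
        have h1 : Filter.Tendsto (fun n => ∑ j ∈ Finset.range n, W j n x)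
            atTop (𝓝 (Den x)) := by
          have hts : ∀ n, (∑' j, (if j < n then W j n x else 0))
              = ∑ j ∈ Finset.range n, W j n x := by
            intro n
            rw [tsum_eq_sum (s := Finset.range n) (fun j hj => if_neg (by simpa using hj))]
            exact Finset.sum_congr rfl (fun j hj => if_pos (Finset.mem_range.mp hj))
          have := tendsto_tsum_of_dominated_convergence
            (f := fun n j => if j < n then W j n x else 0)
            (g := fun j => w j x)
            (bound := fun j => (2⁻¹:ℝ)^j)
            (𝓕 := atTop) hsum_geom ?_ ?_
          · exact Filter.Tendsto.congr (fun n => hts n) this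
          · intro j
            apply Filter.Tendsto.congr' _ (hWlim j x)
            filter_upwards [Filter.eventually_gt_atTop j] with n hn
            rw [if_pos hn]
          · filter_upwards with n
            intro j
            by_cases hj : j < n
            · rw [if_pos hj, Real.norm_eq_abs, abs_of_nonneg (hW_nonneg j n x)]
              exact hW_le j n x
            · rw [if_neg hj, norm_zero]
              positivity
        have h2 : Filter.Tendsto (fun n : ℕ => (2⁻¹:ℝ)^n) atTop (𝓝 0) :=
          tendsto_pow_atTop_nhds_zero_of_lt_one (by norm_num) (by norm_num)
        have := h2.add h1
        simpa using this
      have := hnum.div hden (ne_of_gt (hDenpos x))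
      exact this
  · -- approximation estimate
    intro x
    have hkey : |h x * Den x - Num x| ≤ ε * Den x := by
      have heq : h x * Den x - Num x = ∑' j, (h x - c j) * w j x := by
        rw [hNum, hDen, ← tsum_mul_left, ← Summable.tsum_sub ((hsumw x).mul_left (h x)) (hsumcw x)]
        congr 1
        ext j
        ring
      rw [heq]
      have hterm : ∀ j, |(h x - c j) * w j x| ≤ ε * w j x := by
        intro j
        by_cases hx : x ∈ C j
        · rw [abs_mul, abs_of_nonneg (hw_nonneg j x)]
          apply mul_le_mul_of_nonneg_right _ (hw_nonneg j x)
          exact hosc j x hx _ (hcmem j)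
        · simp [hw, hx]
      have hsumabs : Summable (fun j => |(h x - c j) * w j x|) := by
        apply Summable.of_nonneg_of_le (fun j => abs_nonneg _) hterm
        exact (hsumw x).mul_left ε
      calc |∑' j, (h x - c j) * w j x| ≤ ∑' j, |(h x - c j) * w j x| := by
            have := norm_tsum_le_tsum_norm (f := fun j => (h x - c j) * w j x)
              (by simpa only [Real.norm_eq_abs] using hsumabs)
            simpa only [Real.norm_eq_abs] using this
        _ ≤ ∑' j, ε * w j x := Summable.tsum_le_tsum hterm hsumabs ((hsumw x).mul_left ε)
        _ = ε * Den x := tsum_mul_left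
    have heq2 : h x - Num x / Den x = (h x * Den x - Num x) / Den x := by
      rw [eq_div_iff (ne_of_gt (hDenpos x))]
      ring_nf
      rw [mul_assoc, mul_inv_cancel₀ (ne_of_gt (hDenpos x)), mul_one]
    rw [heq2, abs_div, abs_of_pos (hDenpos x), div_le_iff₀ (hDenpos x)]
    linarith [hkey]

end Approx

section Unif

open Filter Topology

lemma geo_tail_bound (K m : ℕ) : ∑ k ∈ Finset.Ico K m, (2⁻¹:ℝ)^k ≤ 2 * (2⁻¹)^K := by
  rcases le_or_gt m K with hmK | hKm
  · rw [Finset.Ico_eq_empty (by omega), Finset.sum_empty]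
    positivity
  · rw [Finset.sum_Ico_eq_sum_range]
    have : ∀ j ∈ Finset.range (m - K), (2⁻¹:ℝ)^(K + j) = (2⁻¹)^K * (2⁻¹)^j :=
      fun j _ => pow_add _ _ _
    rw [Finset.sum_congr rfl this, ← Finset.mul_sum]
    have hsum : ∑ j ∈ Finset.range (m - K), (2⁻¹:ℝ)^j ≤ 2 := by
      have h1 : ∑ j ∈ Finset.range (m - K), (2⁻¹:ℝ)^j ≤ ∑' j : ℕ, (2⁻¹:ℝ)^j :=
        Summable.sum_le_tsum _ (fun j _ => by positivity)
          (summable_geometric_of_lt_one (by norm_num) (by norm_num))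
      have h2 : ∑' j : ℕ, (2⁻¹:ℝ)^j = 2 := by
        rw [tsum_geometric_of_lt_one (by norm_num) (by norm_num)]
        norm_num
      linarith
    calc (2⁻¹:ℝ)^K * ∑ j ∈ Finset.range (m - K), (2⁻¹:ℝ)^j
        ≤ (2⁻¹:ℝ)^K * 2 := by
          apply mul_le_mul_of_nonneg_left hsum (by positivity)
      _ = 2 * (2⁻¹)^K := by ring

lemma b1_of_approx {X : Type} [TopologicalSpace X] (h : X → ℝ)
    (happ : ∀ k : ℕ, ∃ u, BaireClass1 u ∧ ∀ x, |h x - u x| ≤ (2⁻¹:ℝ)^k) :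
    BaireClass1 h := by
  choose u hu hub using happ
  set v : ℕ → X → ℝ := fun k x => u (k+1) x - u k x with hv
  have hvb : ∀ k x, |v k x| ≤ 2 * (2⁻¹:ℝ)^k := by
    intro k x
    have h1 := hub k x
    have h2 := hub (k+1) x
    have heq : v k x = (h x - u k x) - (h x - u (k+1) x) := by
      show u (k+1) x - u k x = _
      ring
    rw [heq]
    have h3 : |(h x - u k x) - (h x - u (k+1) x)| ≤ |h x - u k x| + |h x - u (k+1) x| :=
      abs_sub _ _
    have h4 : (2⁻¹:ℝ)^(k+1) ≤ (2⁻¹:ℝ)^k := by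
      rw [pow_succ]
      nlinarith [pow_pos (show (0:ℝ) < 2⁻¹ by norm_num) k]
    linarith
  have hvB1 : ∀ k, BaireClass1 (v k) := fun k => b1_sub (hu (k+1)) (hu k)
  choose H hHcont hHtend using hvB1
  obtain ⟨g, hgcont, hgtend⟩ := hu 0
  set b : ℕ → ℝ := fun k => 2 * (2⁻¹:ℝ)^k with hb
  have hbpos : ∀ k, 0 < b k := fun k => by simp only [hb]; positivity
  set P : ℕ → ℕ → X → ℝ := fun k n x => max (-(b k)) (min (b k) (H k n x)) with hP
  have hPcont : ∀ k n, Continuous (P k n) :=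
    fun k n => continuous_const.max (continuous_const.min (hHcont k n))
  have hPb : ∀ k n x, |P k n x| ≤ b k := by
    intro k n x
    rw [abs_le]
    constructor
    · exact le_max_left _ _
    · exact max_le (by linarith [hbpos k]) (min_le_left _ _)
  have hPtend : ∀ k x, Tendsto (fun n => P k n x) atTop (𝓝 (v k x)) := by
    intro k x
    have hmin : min (b k) (v k x) = v k x :=
      min_eq_right (abs_le.mp (hvb k x)).2
    have hmax : max (-(b k)) (v k x) = v k x :=
      max_eq_right (abs_le.mp (hvb k x)).1
    have h1 : Tendsto (fun n => min (b k) (H k n x)) atTop (𝓝 (min (b k) (v k x))) :=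
      Filter.Tendsto.min tendsto_const_nhds (hHtend k x)
    have h2 : Tendsto (fun n => max (-(b k)) (min (b k) (H k n x))) atTop
        (𝓝 (max (-(b k)) (min (b k) (v k x)))) :=
      Filter.Tendsto.max tendsto_const_nhds h1
    rw [hmin, hmax] at h2
    exact h2
  set F : ℕ → X → ℝ := fun m x => g m x + ∑ k ∈ Finset.range m, P k m x with hF
  refine ⟨F, fun m => (hgcont m).add (continuous_finset_sum _ fun k _ => hPcont k m), ?_⟩
  intro x
  rw [Metric.tendsto_atTop]
  intro ε hε
  obtain ⟨K, hK⟩ := exists_pow_lt_of_lt_one (show (0:ℝ) < ε/100 by linarith)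
    (show (2⁻¹:ℝ) < 1 by norm_num)
  -- eventual closeness of the finitely many P k · x and of g · x
  have hev1 : ∀ᶠ m in atTop, |g m x - u 0 x| < ε/4 := by
    have := (hgtend x)
    rw [Metric.tendsto_atTop] at this
    obtain ⟨N, hN⟩ := this (ε/4) (by linarith)
    exact Filter.eventually_atTop.mpr ⟨N, fun m hm => by
      have := hN m hm
      rwa [Real.dist_eq] at this⟩
  have hev2 : ∀ᶠ m in atTop, ∀ k ∈ Finset.range K, |P k m x - v k x| < ε/(4*(K+1)) := by
    rw [Filter.eventually_all_finset]
    intro k _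
    have := hPtend k x
    rw [Metric.tendsto_atTop] at this
    obtain ⟨N, hN⟩ := this (ε/(4*(K+1))) (by positivity)
    exact Filter.eventually_atTop.mpr ⟨N, fun m hm => by
      have := hN m hm
      rwa [Real.dist_eq] at this⟩
  have hev3 : ∀ᶠ m in atTop, K ≤ m := Filter.eventually_ge_atTop K
  rcases Filter.eventually_atTop.mp (hev1.and (hev2.and hev3)) with ⟨N, hN⟩
  refine ⟨N, fun m hm => ?_⟩
  obtain ⟨h1, h2, h3⟩ := hN m hm
  rw [Real.dist_eq]
  -- decompose
  have htel : ∑ k ∈ Finset.range m, v k x = u m x - u 0 x := by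
    simp only [hv]
    exact Finset.sum_range_sub (fun k => u k x) m
  have hdecomp : F m x - h x = (g m x - u 0 x)
      + (∑ k ∈ Finset.range m, (P k m x - v k x)) + (u m x - h x) := by
    simp only [hF]
    rw [Finset.sum_sub_distrib, htel]
    ring
  have hsplit : ∑ k ∈ Finset.range m, |P k m x - v k x|
      = ∑ k ∈ Finset.range K, |P k m x - v k x| + ∑ k ∈ Finset.Ico K m, |P k m x - v k x| := by
    rw [Finset.range_eq_Ico, Finset.range_eq_Ico]
    exact (Finset.sum_Ico_consecutive (fun k => |P k m x - v k x|) (Nat.zero_le K) h3).symm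
  have hbound1 : ∑ k ∈ Finset.range K, |P k m x - v k x| ≤ K * (ε/(4*(K+1))) := by
    calc ∑ k ∈ Finset.range K, |P k m x - v k x|
        ≤ ∑ _k ∈ Finset.range K, (ε/(4*(K+1))) :=
          Finset.sum_le_sum (fun k hk => (h2 k hk).le)
      _ = K * (ε/(4*(K+1))) := by rw [Finset.sum_const, Finset.card_range]; ring
  have hbound1' : (K:ℝ) * (ε/(4*(K+1))) ≤ ε/4 := by
    have h0 : (K:ℝ) ≤ (K:ℝ)+1 := by linarith
    have hmul : (K:ℝ) * (ε/(4*((K:ℝ)+1))) ≤ ((K:ℝ)+1) * (ε/(4*((K:ℝ)+1))) :=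
      mul_le_mul_of_nonneg_right h0 (by positivity)
    have heq : ((K:ℝ)+1) * (ε/(4*((K:ℝ)+1))) = ε/4 := by
      field_simp
    linarith
  have hbound2 : ∑ k ∈ Finset.Ico K m, |P k m x - v k x| ≤ 8 * (2⁻¹:ℝ)^K := by
    calc ∑ k ∈ Finset.Ico K m, |P k m x - v k x|
        ≤ ∑ k ∈ Finset.Ico K m, (4 * (2⁻¹:ℝ)^k) := by
          apply Finset.sum_le_sum
          intro k _
          have ha := hPb k m x
          have hbv := hvb k x
          have := abs_sub (P k m x) (v k x)
          simp only [hb] at ha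
          calc |P k m x - v k x| ≤ |P k m x| + |v k x| := abs_sub _ _
            _ ≤ 2 * (2⁻¹:ℝ)^k + 2 * (2⁻¹:ℝ)^k := by linarith
            _ = 4 * (2⁻¹:ℝ)^k := by ring
      _ = 4 * ∑ k ∈ Finset.Ico K m, (2⁻¹:ℝ)^k := by rw [Finset.mul_sum]
      _ ≤ 4 * (2 * (2⁻¹)^K) := by
          apply mul_le_mul_of_nonneg_left (geo_tail_bound K m) (by norm_num)
      _ = 8 * (2⁻¹:ℝ)^K := by ring
  have hum : |u m x - h x| ≤ (2⁻¹:ℝ)^K := by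
    have := hub m x
    have hmono : (2⁻¹:ℝ)^m ≤ (2⁻¹)^K :=
      pow_le_pow_of_le_one (by norm_num) (by norm_num) h3
    rw [abs_sub_comm] at this
    linarith
  have habs : |F m x - h x| ≤ |g m x - u 0 x|
      + ∑ k ∈ Finset.range m, |P k m x - v k x| + |u m x - h x| := by
    rw [hdecomp]
    calc |g m x - u 0 x + ∑ k ∈ Finset.range m, (P k m x - v k x) + (u m x - h x)|
        ≤ |g m x - u 0 x + ∑ k ∈ Finset.range m, (P k m x - v k x)| + |u m x - h x| :=
          abs_add_le _ _
      _ ≤ |g m x - u 0 x| + |∑ k ∈ Finset.range m, (P k m x - v k x)| + |u m x - h x| := by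
          linarith [abs_add_le (g m x - u 0 x) (∑ k ∈ Finset.range m, (P k m x - v k x))]
      _ ≤ _ := by
          have := Finset.abs_sum_le_sum_abs (fun k => P k m x - v k x) (Finset.range m)
          linarith
  rw [hsplit] at habs
  have : |F m x - h x| < ε/4 + ε/4 + 8 * (ε/100) + ε/100 := by
    have h8 : 8 * (2⁻¹:ℝ)^K < 8 * (ε/100) := by
      apply mul_lt_mul_of_pos_left hK (by norm_num)
    have hum' : |u m x - h x| < ε/100 := lt_of_le_of_lt hum hK
    linarith
  linarith

end Unif

theorem stmt_19 (X : Type) [TopologicalSpace X] [PolishSpace X]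
    (a : Ordinal) (ha : a < (Cardinal.aleph 1).ord)
    (f : Ordinal → X → ℝ)
    (husc : ∀ b, b < a → USC (f b))
    (hnn : ∀ b, b < a → ∀ x, 0 ≤ f b x)
    (hbd : ∀ b, b < a → ∃ M, ∀ x, |f b x| ≤ M)
    (hdec : ∀ b c, b ≤ c → c < a → ∀ x, f c x ≤ f b x)
    (S : Ordinal → X → ℝ)
    (hS0 : S 0 = fun _ => 0)
    (hSsuccEven : ∀ b : Ordinal, b + 1 ≤ a → OrdEven b →
      S (b + 1) = fun x => S b x + f b x)
    (hSsuccOdd : ∀ b : Ordinal, b + 1 ≤ a → ¬ OrdEven b →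
      S (b + 1) = fun x => S b x - f b x)
    (hSlim : ∀ b : Ordinal, b ≤ a → Order.IsSuccLimit b →
      ∀ x, S b x = sSup {y : ℝ | ∃ c, c < b ∧ OrdEven c ∧ y = S c x}) :
    BaireClass1 (S a) := by
  classical
  letI := TopologicalSpace.upgradeIsCompletelyMetrizable X
  by_cases hX : Nonempty X
  swap
  · exact ⟨fun _ _ => 0, fun _ => continuous_const,
      fun x => absurd ⟨x⟩ hX⟩
  rcases eq_or_ne a 0 with rfl | ha0
  · refine ⟨fun _ _ => 0, fun _ => continuous_const, fun x => ?_⟩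
    rw [hS0]
    exact tendsto_const_nhds
  have hapos : 0 < a := pos_iff_ne_zero.mpr ha0
  obtain ⟨M₀, hM₀⟩ := hbd 0 hapos
  have hM₀0 : 0 ≤ M₀ := le_trans (abs_nonneg _) (hM₀ hX.some)
  have hf0M : ∀ x, f 0 x ≤ M₀ := fun x => le_trans (le_abs_self _) (hM₀ x)
  have hfM : ∀ c, c < a → ∀ x, f c x ≤ M₀ :=
    fun c hc x => le_trans (hdec 0 c (zero_le (a := c)) hc x) (hf0M x)
  have hsand := sandwich (X := X) hnn hdec hS0 hSsuccEven hSsuccOdd hSlim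
  have hS0x : ∀ x, S 0 x = (0:ℝ) := fun x => by rw [hS0]
  -- bounds on even partial sums below a
  have hSeven : ∀ c, c < a → OrdEven c → ∀ x, 0 ≤ S c x ∧ S c x ≤ M₀ := by
    intro c hc hce x
    have h0 := hsand c hc.le hce 0 (zero_le (a := c)) ordEven_zero x
    constructor
    · have := h0.1
      rw [hS0x x] at this
      exact this
    · have h2 := h0.2 hc
      rw [hS0x x] at h2
      have h3 := hnn c hc x
      have h4 := hf0M x
      linarith
  -- bound on S a
  have hSbound : ∀ x, |S a x| ≤ 2 * M₀ := by
    intro x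
    rcases Ordinal.zero_or_succ_or_isSuccLimit a with h0 | ⟨c, hc⟩ | hlim
    · exact absurd h0 ha0
    · rw [← Ordinal.add_one_eq_succ, eq_comm] at hc
      have hca : c < a := by rw [hc]; exact lt_add_one c
      have hc1a : c + 1 ≤ a := le_of_eq hc.symm
      by_cases hce : OrdEven c
      · have hval := congrFun (hSsuccEven c hc1a hce) x
        have hb := hSeven c hca hce x
        have h1 := hnn c hca x
        have h2 := hfM c hca x
        rw [hc, hval, abs_le]
        constructor <;> linarith
      · obtain ⟨e, hee, hcee⟩ := odd_eq_even_succ hce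
        have hea : e < a := by rw [hcee] at hca; exact lt_trans (lt_add_one e) hca
        have he1a : e + 1 ≤ a := by rw [hcee] at hca; exact hca.le
        have hval1 := congrFun (hSsuccEven e he1a hee) x
        have hval2 := congrFun (hSsuccOdd c hc1a hce) x
        have hb := hSeven e hea hee x
        have h1 := hnn e hea x
        have h2 := hfM e hea x
        have h3 := hnn c hca x
        have h4 := hdec e c (by rw [hcee]; exact (lt_add_one e).le) hca x
        rw [hc, hval2, hcee, hval1, abs_le]
        rw [hcee] at h3 h4
        constructor <;> linarith
    · have hval := hSlim a le_rfl hlim x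
      have hne : {y : ℝ | ∃ c, c < a ∧ OrdEven c ∧ y = S c x}.Nonempty :=
        ⟨S 0 x, 0, hapos, ordEven_zero, rfl⟩
      have hub : ∀ y ∈ {y : ℝ | ∃ c, c < a ∧ OrdEven c ∧ y = S c x}, y ≤ M₀ := by
        rintro y ⟨c, hc, hce, rfl⟩
        exact (hSeven c hc hce x).2
      have h1 : S a x ≤ M₀ := by
        rw [hval]
        exact csSup_le hne hub
      have h2 : 0 ≤ S a x := by
        rw [hval]
        have := le_csSup ⟨M₀, hub⟩ (show S 0 x ∈ _ from ⟨0, hapos, ordEven_zero, rfl⟩)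
        rw [hS0x x] at this
        linarith [this]
      rw [abs_le]
      constructor <;> linarith
  -- the covering property for S a
  have hcov := cov_S (X := X) ha husc hnn hdec hS0 hSsuccEven hSsuccOdd hSlim a le_rfl
  -- conclude
  apply b1_of_approx
  intro k
  obtain ⟨C, hCcl, hCcov, hCosc⟩ := hcov ((2⁻¹:ℝ)^k) (by positivity)
  obtain ⟨n₀, hn₀⟩ := hCcov hX.some
  set C' : ℕ → Set X := fun n => if (C n).Nonempty then C n else C n₀ with hC'
  have hC'cl : ∀ n, IsClosed (C' n) := by
    intro n
    simp only [hC']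
    by_cases hn : (C n).Nonempty
    · rw [if_pos hn]; exact hCcl n
    · rw [if_neg hn]; exact hCcl n₀
  have hC'ne : ∀ n, (C' n).Nonempty := by
    intro n
    simp only [hC']
    by_cases hn : (C n).Nonempty
    · rw [if_pos hn]; exact hn
    · rw [if_neg hn]; exact ⟨hX.some, hn₀⟩
  have hC'cov : ∀ x, ∃ n, x ∈ C' n := by
    intro x
    obtain ⟨n, hn⟩ := hCcov x
    refine ⟨n, ?_⟩
    simp only [hC']
    rw [if_pos ⟨x, hn⟩]
    exact hn
  have hC'osc : ∀ n, ∀ x ∈ C' n, ∀ y ∈ C' n, |S a x - S a y| ≤ (2⁻¹:ℝ)^k := by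
    intro n
    simp only [hC']
    by_cases hn : (C n).Nonempty
    · rw [if_pos hn]; exact hCosc n
    · rw [if_neg hn]; exact hCosc n₀
  exact b1_approx_of_cov (S a) (2*M₀) ((2⁻¹:ℝ)^k) (by positivity) hSbound C'
    hC'cl hC'ne hC'cov hC'osc
end
end
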